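/- arXiv:1511.08784 — 6 statements merged into one kernel-verified Lean document; each statement's English description precedes it below -/
import Mathlib

section
/- Let a, b be coprime positive integers with a > b, a+b not a power of 2, and (a,b) ≠ (2,1). Then there exists a real constant c > 0 such that ω(a^n - b^n) > c·log(n) for infinitely many positive integers n. -/
/-- If `n ≠ 0` and `n` is not a power of 2, then `n` has an odd prime factor. -/
lemma exists_odd_prime_dvd_aux {n : ℕ} (hn : n ≠ 0) (h : ¬∃ m : ℕ, n = 2 ^ m) :
    ∃ p : ℕ, p.Prime ∧ p ≠ 2 ∧ p ∣ n := by
  by_contra hc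
  push_neg at hc
  exact h ⟨n.primeFactorsList.length,
    Nat.eq_prime_pow_of_unique_prime_dvd hn (fun {d} hd hdn => by
      by_contra h2; exact hc d hd h2 hdn)⟩

/-- For coprime positive integers `a > b` with `a+b` not a power
of `2` and `(a,b) ≠ (2,1)`, there is a real constant `c > 0` such that
`ω(a^n - b^n) > c · log n` for infinitely many positive integers `n`. -/
theorem omega_pow_sub_pow_gt_log
    (a b : ℕ) (hb : 0 < b) (hab : b < a) (hcop : Nat.Coprime a b)
    (hpow2 : ¬∃ m : ℕ, a + b = 2 ^ m) (hexc : ¬(a = 2 ∧ b = 1)) :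
    ∃ c : ℝ, 0 < c ∧
      ∀ N : ℕ, ∃ n : ℕ, N ≤ n ∧ 1 ≤ n ∧
        c * Real.log n < ((a ^ n - b ^ n).primeFactors.card : ℝ) := by
  -- setup: f i = a^(2^i) + b^(2^i)
  set f : ℕ → ℕ := fun i => a ^ (2 ^ i) + b ^ (2 ^ i) with hf
  have ha2 : 2 ≤ a := hab.trans_le' hb
  -- each f i is not a power of 2
  have hfnotpow : ∀ i, ¬∃ m : ℕ, f i = 2 ^ m := by
    intro i ⟨m, hm⟩
    rcases Nat.eq_zero_or_pos i with hi | hi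
    · subst hi
      refine hpow2 ⟨m, ?_⟩
      simp only [hf, pow_zero, pow_one] at hm
      exact hm
    · -- i ≥ 1
      rcases Nat.even_or_odd (a + b) with hev | hodd
      · -- both a,b odd (coprime): f i ≡ 2 mod 4 and f i > 2
        have hao : Odd a := by
          rcases Nat.even_or_odd a with ha | ha
          · exfalso
            have hbe : Even b := (Nat.even_add.mp hev).mp ha
            have : 2 ∣ Nat.gcd a b := Nat.dvd_gcd ha.two_dvd hbe.two_dvd
            rw [hcop] at this; omega
          · exact ha
        have hbo : Odd b := by
          rcases Nat.even_or_odd b with hb' | hb'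
          · exfalso
            have : Even a := by
              rcases Nat.even_add.mp hev with h
              exact h.mpr hb'
            exact (Nat.not_even_iff_odd.mpr hao) this
          · exact hb'
        -- a^(2^i) % 4 = 1 and b^(2^i) % 4 = 1
        have hsq : ∀ x : ℕ, Odd x → ∀ j, 1 ≤ j → x ^ (2 ^ j) % 4 = 1 := by
          intro x hx j hj
          obtain ⟨t, ht⟩ := hx
          have : 2 ^ j = 2 * 2 ^ (j - 1) := by
            rw [← pow_succ']; congr 1; omega
          rw [this, pow_mul]
          have : x ^ 2 % 4 = 1 := by subst ht; ring_nf; omega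
          have h4 : (x ^ 2) ^ (2 ^ (j-1)) % 4 = (x ^ 2 % 4) ^ (2 ^ (j-1)) % 4 :=
            Nat.pow_mod _ _ _
          rw [h4, this, one_pow]
          norm_num
        have ha4 := hsq a hao i hi
        have hb4 := hsq b hbo i hi
        have hmod : f i % 4 = 2 := by
          have : f i = a ^ (2 ^ i) + b ^ (2 ^ i) := rfl
          omega
        have hge : 4 ≤ f i := by
          have : 2 ^ (2 ^ i) ≤ a ^ (2 ^ i) := Nat.pow_le_pow_left ha2 _
          have h2i : 2 ≤ 2 ^ i := by
            calc 2 = 2 ^ 1 := rfl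
            _ ≤ 2 ^ i := Nat.pow_le_pow_right (by norm_num) hi
          have : 2 ^ 2 ≤ 2 ^ (2 ^ i) := Nat.pow_le_pow_right (by norm_num) h2i
          simp only [hf]; omega
        -- f i = 2^m with f i % 4 = 2 forces m = 1, but f i ≥ 4
        have : m ≤ 1 := by
          by_contra hm2
          have : 4 ∣ 2 ^ m := by
            have : (2:ℕ) ^ 2 ∣ 2 ^ m := Nat.pow_dvd_pow 2 (by omega)
            simpa using this
          omega
        interval_cases m <;> omega
      · -- a + b odd: f i is odd and > 1
        have hodd' : Odd (f i) := by
          have : Odd (a ^ (2 ^ i) + b ^ (2 ^ i)) := by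
            rcases Nat.even_add.not.mp (Nat.not_even_iff_odd.mpr hodd) with h
            rcases Nat.even_or_odd a with ha | ha
            · have hbo : Odd b := by
                rcases Nat.even_or_odd b with hb' | hb'
                · exact absurd (Nat.even_add.mpr ⟨fun _ => hb', fun _ => ha⟩)
                    (Nat.not_even_iff_odd.mpr hodd)
                · exact hb'
              exact (Nat.even_pow.mpr ⟨ha, by positivity⟩).add_odd (hbo.pow)
            · have hbe : Even b := by
                rcases Nat.even_or_odd b with hb' | hb'
                · exact hb'
                · exact absurd (ha.add_odd hb') (Nat.not_even_iff_odd.mpr hodd)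
              exact Odd.add_even (ha.pow) (Nat.even_pow.mpr ⟨hbe, by positivity⟩)
          exact this
        have hgt : 2 ≤ f i := by
          have : 2 ≤ a ^ (2 ^ i) := le_trans ha2 (Nat.le_self_pow (by positivity) a)
          simp only [hf]; omega
        rw [hm] at hodd'
        have : m = 0 := by
          by_contra hm0
          exact (Nat.not_odd_iff_even.mpr (Nat.even_pow.mpr ⟨even_two, hm0⟩)) hodd'
        rw [hm, this] at hgt; norm_num at hgt
  -- choose odd prime q i dividing f i
  have hq : ∀ i, ∃ p : ℕ, p.Prime ∧ p ≠ 2 ∧ p ∣ f i := by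
    intro i
    apply exists_odd_prime_dvd_aux (by positivity) (hfnotpow i)
  choose q hqp hq2 hqd using hq
  -- f i divides a^(2^k) - b^(2^k) for i < k
  have hfd : ∀ i k : ℕ, i < k → f i ∣ a ^ (2 ^ k) - b ^ (2 ^ k) := by
    intro i k hik
    have h1 : f i ∣ a ^ (2 ^ (i+1)) - b ^ (2 ^ (i+1)) := by
      have : a ^ (2 ^ (i+1)) - b ^ (2 ^ (i+1))
          = (a ^ (2 ^ i)) ^ 2 - (b ^ (2 ^ i)) ^ 2 := by
        rw [← pow_mul, ← pow_mul, pow_succ]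
      rw [this, Nat.sq_sub_sq]
      exact Dvd.intro _ rfl
    have h2 : a ^ (2 ^ (i+1)) - b ^ (2 ^ (i+1)) ∣ a ^ (2 ^ k) - b ^ (2 ^ k) := by
      have hk : 2 ^ k = 2 ^ (i+1) * 2 ^ (k - (i+1)) := by
        rw [← pow_add]; congr 1; omega
      rw [hk, pow_mul, pow_mul]
      exact Nat.sub_dvd_pow_sub_pow _ _ _
    exact h1.trans h2
  -- q injective
  have hqinj : ∀ i j : ℕ, i < j → q i ≠ q j := by
    intro i j hij heq
    have hd1 : q j ∣ a ^ (2 ^ j) - b ^ (2 ^ j) := heq ▸ (hqd i).trans (hfd i j hij)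
    have hd2 : q j ∣ a ^ (2 ^ j) + b ^ (2 ^ j) := hqd j
    have hle : b ^ (2 ^ j) ≤ a ^ (2 ^ j) := Nat.pow_le_pow_left hab.le _
    have hda : q j ∣ 2 * a ^ (2 ^ j) := by
      have := Nat.dvd_add hd1 hd2
      have heq2 : a ^ (2 ^ j) - b ^ (2 ^ j) + (a ^ (2 ^ j) + b ^ (2 ^ j))
          = 2 * a ^ (2 ^ j) := by omega
      rwa [heq2] at this
    have hdb : q j ∣ 2 * b ^ (2 ^ j) := by
      have := Nat.dvd_sub hd2 hd1
      have heq2 : a ^ (2 ^ j) + b ^ (2 ^ j) - (a ^ (2 ^ j) - b ^ (2 ^ j))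
          = 2 * b ^ (2 ^ j) := by omega
      rwa [heq2] at this
    have hqa : q j ∣ a := by
      rcases (Nat.Prime.dvd_mul (hqp j)).mp hda with h | h
      · exact absurd ((Nat.prime_dvd_prime_iff_eq (hqp j) Nat.prime_two).mp h) (hq2 j)
      · exact (Nat.Prime.dvd_of_dvd_pow (hqp j)) h
    have hqb : q j ∣ b := by
      rcases (Nat.Prime.dvd_mul (hqp j)).mp hdb with h | h
      · exact absurd ((Nat.prime_dvd_prime_iff_eq (hqp j) Nat.prime_two).mp h) (hq2 j)
      · exact (Nat.Prime.dvd_of_dvd_pow (hqp j)) h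
    have : q j ∣ Nat.gcd a b := Nat.dvd_gcd hqa hqb
    rw [hcop] at this
    exact (hqp j).one_lt.ne' (Nat.dvd_one.mp this)
  -- main counting: for k ≥ 1, (a^(2^k) - b^(2^k)).primeFactors.card ≥ k
  have hcount : ∀ k : ℕ, k ≤ (a ^ (2 ^ k) - b ^ (2 ^ k)).primeFactors.card := by
    intro k
    have hne : a ^ (2 ^ k) - b ^ (2 ^ k) ≠ 0 := by
      have : b ^ (2 ^ k) < a ^ (2 ^ k) :=
        Nat.pow_lt_pow_left hab (by positivity)
      omega
    have hsub : (Finset.range k).image q ⊆ (a ^ (2 ^ k) - b ^ (2 ^ k)).primeFactors := by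
      intro p hp
      simp only [Finset.mem_image, Finset.mem_range] at hp
      obtain ⟨i, hi, rfl⟩ := hp
      exact Nat.mem_primeFactors.mpr ⟨hqp i, (hqd i).trans (hfd i k hi), hne⟩
    have hcard : ((Finset.range k).image q).card = k := by
      rw [Finset.card_image_of_injOn, Finset.card_range]
      intro i hi j hj hij
      by_contra hne'
      rcases Nat.lt_or_ge i j with h | h
      · exact hqinj i j h hij
      · exact hqinj j i (by omega) hij.symm
    calc k = ((Finset.range k).image q).card := hcard.symm
      _ ≤ _ := Finset.card_le_card hsub
  -- analytic conclusion with c = 1 / (2 * log 2)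
  refine ⟨1 / (2 * Real.log 2), by positivity, fun N => ?_⟩
  obtain ⟨k, hk1, hkN⟩ : ∃ k : ℕ, 1 ≤ k ∧ N ≤ k := ⟨N + 1, by omega, by omega⟩
  refine ⟨2 ^ k, ?_, Nat.one_le_two_pow, ?_⟩
  · calc N ≤ k := hkN
      _ ≤ 2 ^ k := Nat.le_of_lt (Nat.lt_two_pow_self (n := k))
  · have hlog : Real.log ((2:ℕ) ^ k : ℕ) = k * Real.log 2 := by
      push_cast
      rw [Real.log_pow]
    rw [hlog]
    have hc : (1 / (2 * Real.log 2)) * (k * Real.log 2) = k / 2 := by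
      field_simp
    rw [hc]
    have hkk : (k : ℝ) ≤ ((a ^ 2 ^ k - b ^ 2 ^ k).primeFactors.card : ℝ) := by
      exact_mod_cast hcount k
    have : (0:ℝ) < k := by positivity
    linarith
end

section
/- Let c₁,…,c_k be positive rationals and x₁,…,x_k nonzero rationals. If the sequence n ↦ ω(c₁x₁^n + ⋯ + c_k x_k^n) is bounded, then |x₁| = |x₂| = ⋯ = |x_k|. -/
/-- Number of distinct prime factors of a rational number `x/y` in lowest
terms (`y > 0`, `x ≠ 0`): `ω(x) + ω(y)`. -/
def ratOmega (q : ℚ) : ℕ :=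
  q.num.natAbs.primeFactors.card + q.den.primeFactors.card

section Core

variable {k : ℕ} (e a : Fin k → ℕ)

/-- The integer sequence. -/
def AS (n : ℕ) : ℕ := ∑ i, e i * a i ^ n

lemma modeq_sum {ι : Type*} (s : Finset ι) (f g : ι → ℕ) (N : ℕ)
    (h : ∀ i ∈ s, f i ≡ g i [MOD N]) : ∑ i ∈ s, f i ≡ ∑ i ∈ s, g i [MOD N] := by
  classical
  induction s using Finset.induction_on with
  | empty => simp [Nat.ModEq.refl]
  | @insert i s hx ih =>
    simp only [Finset.sum_insert hx]
    exact (h i (Finset.mem_insert_self i s)).add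
      (ih fun j hj => h j (Finset.mem_insert_of_mem hj))

lemma pow_congr {q : ℕ} (hq : q.Prime) (K : ℕ) (b n0 t : ℕ) (hn0 : K ≤ n0) :
    b ^ (n0 + t * Nat.totient (q ^ K)) ≡ b ^ n0 [MOD q ^ K] := by
  by_cases hdvd : q ∣ b
  · have h1 : q ^ K ∣ b ^ n0 :=
      dvd_trans (pow_dvd_pow q hn0) (pow_dvd_pow_of_dvd hdvd n0)
    have h2 : q ^ K ∣ b ^ (n0 + t * Nat.totient (q ^ K)) :=
      dvd_trans h1 (pow_dvd_pow b (Nat.le_add_right _ _))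
    exact (Nat.modEq_zero_iff_dvd.mpr h2).trans (Nat.modEq_zero_iff_dvd.mpr h1).symm
  · have hcop : Nat.Coprime b (q ^ K) :=
      Nat.Coprime.pow_right K ((Nat.Prime.coprime_iff_not_dvd hq).mpr hdvd).symm
    have heuler : b ^ Nat.totient (q ^ K) ≡ 1 [MOD q ^ K] := Nat.ModEq.pow_totient hcop
    calc b ^ (n0 + t * Nat.totient (q ^ K))
        = b ^ n0 * (b ^ Nat.totient (q ^ K)) ^ t := by rw [pow_add, pow_mul']
      _ ≡ b ^ n0 * 1 ^ t [MOD q ^ K] := Nat.ModEq.mul_left _ (heuler.pow t)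
      _ = b ^ n0 := by simp

lemma AS_congr {q : ℕ} (hq : q.Prime) (K n0 t : ℕ) (hn0 : K ≤ n0) :
    AS e a (n0 + t * Nat.totient (q ^ K)) ≡ AS e a n0 [MOD q ^ K] := by
  unfold AS
  exact modeq_sum _ _ _ _ fun i _ =>
    Nat.ModEq.mul_left (e i) (pow_congr hq K (a i) n0 t hn0)

end Core


/-- Removal lemma: if `q^n` divides `∑_{v∈V} D v * v^n` for all `n` in the AP
`r + j*m`, then for each `i ∈ V` with `D i ≠ 0` there is a nonzero constant `C`
with `q^n ∣ C * i^n` along the AP. -/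
lemma remove_lemma (q : ℕ) (m : ℕ) (hm : 0 < m) (r : ℕ) :
    ∀ (s : ℕ) (V : Finset ℕ), V.card = s → ∀ (D : ℕ → ℤ),
    (∀ j : ℕ, (q : ℤ) ^ (r + j * m) ∣ ∑ v ∈ V, D v * (v : ℤ) ^ (r + j * m)) →
    ∀ i ∈ V, D i ≠ 0 →
    ∃ C : ℤ, C ≠ 0 ∧ ∀ j : ℕ, (q : ℤ) ^ (r + j * m) ∣ C * (i : ℤ) ^ (r + j * m) := by
  intro s
  induction s with
  | zero =>
    intro V hV D _ i hi _
    simp [Finset.card_eq_zero.mp hV] at hi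
  | succ s ih =>
    intro V hV D hdvd i hi hDi
    by_cases hsing : V = {i}
    · refine ⟨D i, hDi, fun j => ?_⟩
      have := hdvd j
      simpa [hsing] using this
    · -- pick j0 ∈ V, j0 ≠ i
      have hne : (V.erase i).Nonempty := by
        rcases Finset.eq_empty_or_nonempty (V.erase i) with h | h
        · exfalso; apply hsing
          apply Finset.eq_singleton_iff_unique_mem.mpr
          refine ⟨hi, fun y hy => ?_⟩
          by_contra hyne
          exact Finset.notMem_empty y (h ▸ Finset.mem_erase.mpr ⟨hyne, hy⟩)
        · exact h
      obtain ⟨j0, hj0⟩ := hne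
      have hj0V : j0 ∈ V := Finset.mem_of_mem_erase hj0
      have hj0i : j0 ≠ i := Finset.ne_of_mem_erase hj0
      set D' : ℕ → ℤ := fun v => D v * ((j0 : ℤ) ^ m - (v : ℤ) ^ m) with hD'
      have hcard : (V.erase j0).card = s := by
        rw [Finset.card_erase_of_mem hj0V, hV]; rfl
      have hdvd' : ∀ j : ℕ,
          (q : ℤ) ^ (r + j * m) ∣ ∑ v ∈ V.erase j0, D' v * (v : ℤ) ^ (r + j * m) := by
        intro j
        have hsum : ∑ v ∈ V.erase j0, D' v * (v : ℤ) ^ (r + j * m)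
            = (j0 : ℤ) ^ m * (∑ v ∈ V, D v * (v : ℤ) ^ (r + j * m))
              - ∑ v ∈ V, D v * (v : ℤ) ^ (r + (j + 1) * m) := by
          rw [Finset.sum_erase_eq_sub hj0V]
          have h1 : D' j0 * (j0 : ℤ) ^ (r + j * m) = 0 := by simp [hD']
          rw [h1, sub_zero, Finset.mul_sum, ← Finset.sum_sub_distrib]
          apply Finset.sum_congr rfl
          intro v _
          have : r + (j + 1) * m = (r + j * m) + m := by ring
          rw [this, pow_add]
          ring
        rw [hsum]
        exact dvd_sub (Dvd.dvd.mul_left (hdvd j) _)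
          (dvd_trans (pow_dvd_pow _ (by nlinarith)) (hdvd (j + 1)))
      have hiV' : i ∈ V.erase j0 := Finset.mem_erase.mpr ⟨fun h => hj0i h.symm, hi⟩
      have hD'i : D' i ≠ 0 := by
        apply mul_ne_zero hDi
        rw [sub_ne_zero]
        intro hpow
        apply hj0i
        have : j0 ^ m = i ^ m := by exact_mod_cast hpow
        exact Nat.pow_left_injective (by omega) this
      exact ih (V.erase j0) hcard D' hdvd' i hiV' hD'i

/-- If `q^n ∣ C·iⁿ` along an AP with `C ≠ 0` and `q` prime, then `q ∣ i`. -/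
lemma prime_dvd_of_dvd_ap (q : ℕ) (hq : q.Prime) (m : ℕ) (hm : 0 < m) (r : ℕ)
    (i : ℕ) (C : ℤ) (hC : C ≠ 0)
    (h : ∀ j : ℕ, (q : ℤ) ^ (r + j * m) ∣ C * (i : ℤ) ^ (r + j * m)) :
    q ∣ i := by
  by_contra hqi
  set n := r + (C.natAbs + 1) * m with hn
  have hdvd : q ^ n ∣ C.natAbs * i ^ n := by
    have h1 := h (C.natAbs + 1)
    have h2 : (q : ℤ) ^ n ∣ |C * (i : ℤ) ^ n| := (dvd_abs _ _).mpr h1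
    rw [abs_mul, Int.abs_eq_natAbs, abs_pow, Int.abs_eq_natAbs] at h2
    have h3 : ((q ^ n : ℕ) : ℤ) ∣ ((C.natAbs * i ^ n : ℕ) : ℤ) := by
      push_cast
      simpa using h2
    exact_mod_cast h3
  have hcop : Nat.Coprime (q ^ n) (i ^ n) :=
    Nat.Coprime.pow _ _ ((Nat.Prime.coprime_iff_not_dvd hq).mpr hqi)
  have hdvdC : q ^ n ∣ C.natAbs := (Nat.Coprime.dvd_of_dvd_mul_right hcop) hdvd
  have hCpos : 0 < C.natAbs := Int.natAbs_pos.mpr hC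
  have hle : q ^ n ≤ C.natAbs := Nat.le_of_dvd hCpos hdvdC
  have hlt : C.natAbs < q ^ n := by
    calc C.natAbs < 2 ^ C.natAbs := Nat.lt_two_pow_self
      _ ≤ 2 ^ n := by
          apply Nat.pow_le_pow_right (by norm_num)
          have : C.natAbs + 1 ≤ (C.natAbs + 1) * m := Nat.le_mul_of_pos_right _ hm
          omega
      _ ≤ q ^ n := Nat.pow_le_pow_left hq.two_le n
  omega


section Core3
variable {k : ℕ} (e a : Fin k → ℕ)

/-- If `q^n ∣ AS n` along an AP, then `q` divides every `a i`. -/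
lemma bad_prime (he : ∀ i, 0 < e i) {q : ℕ} (hq : q.Prime) (r m : ℕ) (hm : 0 < m)
    (h : ∀ j : ℕ, q ^ (r + j * m) ∣ AS e a (r + j * m)) :
    ∀ i, q ∣ a i := by
  classical
  set V : Finset ℕ := Finset.image a Finset.univ with hV
  set D : ℕ → ℤ := fun v => ((∑ i ∈ Finset.univ.filter (fun i => a i = v), e i : ℕ) : ℤ)
    with hD
  have key : ∀ n : ℕ, ((AS e a n : ℕ) : ℤ) = ∑ v ∈ V, D v * (v : ℤ) ^ n := by
    intro n
    unfold AS
    rw [← Finset.sum_fiberwise_of_maps_to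
      (fun i _ => Finset.mem_image_of_mem a (Finset.mem_univ i))
      (fun i => e i * a i ^ n)]
    push_cast
    apply Finset.sum_congr rfl
    intro v _
    simp only [hD]
    push_cast
    rw [Finset.sum_mul]
    apply Finset.sum_congr rfl
    intro i hifil
    rw [Finset.mem_filter] at hifil
    rw [hifil.2]
  intro i
  have haiV : a i ∈ V := Finset.mem_image_of_mem a (Finset.mem_univ i)
  have hDai : D (a i) ≠ 0 := by
    have : 0 < ∑ j ∈ Finset.univ.filter (fun j => a j = a i), e j :=
      Finset.sum_pos (fun j _ => he j)
        ⟨i, Finset.mem_filter.mpr ⟨Finset.mem_univ i, rfl⟩⟩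
    simp only [hD, ne_eq, Nat.cast_eq_zero]
    omega
  have hdvdZ : ∀ j : ℕ, (q : ℤ) ^ (r + j * m) ∣ ∑ v ∈ V, D v * (v : ℤ) ^ (r + j * m) := by
    intro j
    rw [← key]
    exact_mod_cast Int.natCast_dvd_natCast.mpr (h j)
  obtain ⟨C, hC, hCdvd⟩ := remove_lemma q m hm r V.card V rfl D hdvdZ (a i) haiV hDai
  exact prime_dvd_of_dvd_ap q hq m hm r (a i) C hC hCdvd

/-- Refine an AP so that the `q`-adic valuation of `AS` is constant on it. -/
lemma refine_one (he : ∀ i, 0 < e i) (hgcd : Finset.univ.gcd a = 1)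
    (hpos : ∀ n, 0 < AS e a n)
    {q : ℕ} (hq : q.Prime) (r m : ℕ) (hm : 0 < m) (hr : 0 < r) :
    ∃ r' m', 0 < m' ∧ (∃ j0, r' = r + j0 * m) ∧ (∃ d, m' = m * d) ∧
      ∃ c, ∀ j : ℕ, (AS e a (r' + j * m')).factorization q = c := by
  -- find a point with small valuation
  have hex : ∃ j0, ¬ q ^ (r + j0 * m) ∣ AS e a (r + j0 * m) := by
    by_contra hcon
    push_neg at hcon
    have hdvdall := bad_prime e a he hq r m hm hcon
    have : q ∣ Finset.univ.gcd a := Finset.dvd_gcd fun i _ => hdvdall i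
    rw [hgcd] at this
    have := Nat.le_of_dvd one_pos this
    have := hq.two_le
    omega
  obtain ⟨j0, hj0⟩ := hex
  set n0 := r + j0 * m with hn0
  set c := (AS e a n0).factorization q with hc
  have hcK : c < n0 := by
    by_contra hle
    push_neg at hle
    exact hj0 (dvd_trans (pow_dvd_pow q hle) (Nat.ordProj_dvd _ _))
  set K := c + 1 with hK
  have hKn0 : K ≤ n0 := hcK
  have hphi : 0 < Nat.totient (q ^ K) :=
    Nat.totient_pos.mpr (pow_pos hq.pos K)
  refine ⟨n0, m * Nat.totient (q ^ K), by positivity, ⟨j0, rfl⟩, ⟨_, rfl⟩, c, ?_⟩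
  intro j
  have hmod : AS e a (n0 + j * (m * Nat.totient (q ^ K))) ≡ AS e a n0 [MOD q ^ K] := by
    rw [← mul_assoc]
    exact AS_congr e a hq K n0 (j * m) hKn0
  set N := AS e a (n0 + j * (m * Nat.totient (q ^ K))) with hN
  have hNne : N ≠ 0 := (hpos _).ne'
  have hN0ne : AS e a n0 ≠ 0 := (hpos _).ne'
  have hdvdc : q ^ c ∣ N := by
    have h1 : N ≡ AS e a n0 [MOD q ^ c] :=
      Nat.ModEq.of_dvd (pow_dvd_pow q (Nat.le_succ c)) hmod
    have h2 : AS e a n0 ≡ 0 [MOD q ^ c] := Nat.modEq_zero_iff_dvd.mpr (Nat.ordProj_dvd _ _)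
    exact Nat.modEq_zero_iff_dvd.mp (h1.trans h2)
  have hnotdvd : ¬ q ^ (c + 1) ∣ N := by
    intro hcon
    have h1 : AS e a n0 ≡ 0 [MOD q ^ (c + 1)] :=
      (hmod.symm.trans (Nat.modEq_zero_iff_dvd.mpr hcon))
    exact Nat.pow_succ_factorization_not_dvd hN0ne hq (Nat.modEq_zero_iff_dvd.mp h1)
  have hle1 : c ≤ N.factorization q :=
    (hq.pow_dvd_iff_le_factorization hNne).mp hdvdc
  have hle2 : N.factorization q ≤ c := by
    by_contra hlt
    push_neg at hlt
    exact hnotdvd ((hq.pow_dvd_iff_le_factorization hNne).mpr hlt)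
  omega

end Core3

section Core4
variable {k : ℕ} (e a : Fin k → ℕ)

lemma refine_set (he : ∀ i, 0 < e i) (hgcd : Finset.univ.gcd a = 1)
    (hpos : ∀ n, 0 < AS e a n)
    (S : Finset ℕ) (hS : ∀ q ∈ S, q.Prime) (r m : ℕ) (hm : 0 < m) (hr : 0 < r) :
    ∃ r' m', 0 < m' ∧ 0 < r' ∧ (∃ j0, r' = r + j0 * m) ∧ (∃ d, m' = m * d) ∧
      ∀ q ∈ S, ∃ c, ∀ j : ℕ, (AS e a (r' + j * m')).factorization q = c := by
  classical
  induction S using Finset.induction_on with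
  | empty =>
    exact ⟨r, m, hm, hr, ⟨0, by ring⟩, ⟨1, by ring⟩, fun q hq => absurd hq (by simp)⟩
  | @insert q S hqS ih =>
    obtain ⟨r1, m1, hm1, hr1, ⟨j0, hj0⟩, ⟨d0, hd0⟩, hconst⟩ :=
      ih fun p hp => hS p (Finset.mem_insert_of_mem hp)
    have hqprime : q.Prime := hS q (Finset.mem_insert_self q S)
    obtain ⟨r2, m2, hm2, ⟨j1, hj1⟩, ⟨d1, hd1⟩, c, hc⟩ :=
      refine_one e a he hgcd hpos hqprime r1 m1 hm1 hr1
    have hr2 : 0 < r2 := by rw [hj1]; omega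
    refine ⟨r2, m2, hm2, hr2, ⟨j0 + j1 * d0, by rw [hj1, hj0, hd0]; ring⟩,
      ⟨d0 * d1, by rw [hd1, hd0]; ring⟩, ?_⟩
    intro p hp
    rcases Finset.mem_insert.mp hp with rfl | hpS
    · exact ⟨c, hc⟩
    · obtain ⟨cp, hcp⟩ := hconst p hpS
      refine ⟨cp, fun j => ?_⟩
      have harith : r2 + j * m2 = r1 + (j1 + j * d1) * m1 := by
        rw [hj1, hd1]; ring
      rw [harith]
      exact hcp _

/-- If all the prime factors of `N ≠ 0` lie in a set `S` of primes, then `N` is the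
product over `S` of `q ^ (v_q N)`. -/
lemma eq_prod_of_primeFactors_subset {N : ℕ} (hN : N ≠ 0) {S : Finset ℕ}
    (hsub : N.primeFactors ⊆ S) :
    N = ∏ q ∈ S, q ^ N.factorization q := by
  conv_lhs => rw [← Nat.factorization_prod_pow_eq_self hN]
  exact Finsupp.prod_of_support_subset _ (by rw [Nat.support_factorization]; exact hsub)
    _ (fun q _ => pow_zero q)

lemma find_new_prime (i2 : Fin k) (hi2 : 2 ≤ a i2) (he : ∀ i, 0 < e i)
    (hpos : ∀ n, 0 < AS e a n)
    (S : Finset ℕ) (hS : ∀ q ∈ S, q.Prime) (r m : ℕ) (hm : 0 < m)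
    (hconst : ∀ q ∈ S, ∃ c, ∀ j : ℕ, (AS e a (r + j * m)).factorization q = c) :
    ∃ n p, (∃ j, n = r + j * m) ∧ p.Prime ∧ p ∣ AS e a n ∧ p ∉ S := by
  classical
  have hgrow : ∀ n, 2 ^ n ≤ AS e a n := by
    intro n
    unfold AS
    calc 2 ^ n ≤ a i2 ^ n := Nat.pow_le_pow_left hi2 n
      _ ≤ e i2 * a i2 ^ n := Nat.le_mul_of_pos_left _ (he i2)
      _ ≤ ∑ i, e i * a i ^ n :=
          Finset.single_le_sum (f := fun i => e i * a i ^ n)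
            (fun i _ => Nat.zero_le _) (Finset.mem_univ i2)
  set n1 := r + (AS e a r) * m with hn1
  have hlt : AS e a r < AS e a n1 := by
    calc AS e a r < 2 ^ AS e a r := Nat.lt_two_pow_self
      _ ≤ 2 ^ n1 := Nat.pow_le_pow_right (by norm_num)
          (by have : AS e a r ≤ AS e a r * m := Nat.le_mul_of_pos_right _ hm; omega)
      _ ≤ AS e a n1 := hgrow n1
  by_cases hsub : (AS e a n1).primeFactors ⊆ S
  · by_cases hsub0 : (AS e a r).primeFactors ⊆ S
    · exfalso
      have h1 : AS e a r = ∏ q ∈ S, q ^ (AS e a r).factorization q :=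
        eq_prod_of_primeFactors_subset (hpos r).ne' hsub0
      have h2 : AS e a n1 = ∏ q ∈ S, q ^ (AS e a n1).factorization q :=
        eq_prod_of_primeFactors_subset (hpos n1).ne' hsub
      have h3 : ∀ q ∈ S, (AS e a r).factorization q = (AS e a n1).factorization q := by
        intro q hq
        obtain ⟨c, hc⟩ := hconst q hq
        have e1 := hc 0
        have e2 := hc (AS e a r)
        simp only [Nat.zero_mul, Nat.add_zero] at e1
        rw [← hn1] at e2
        rw [e1, e2]
      rw [h1, h2] at hlt
      have heq : (∏ q ∈ S, q ^ (AS e a r).factorization q)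
          = ∏ q ∈ S, q ^ (AS e a n1).factorization q :=
        Finset.prod_congr rfl fun q hq => by rw [h3 q hq]
      omega
    · obtain ⟨p, hp⟩ := Finset.not_subset.mp hsub0
      exact ⟨r, p, ⟨0, by ring⟩, Nat.prime_of_mem_primeFactors hp.1,
        Nat.dvd_of_mem_primeFactors hp.1, hp.2⟩
  · obtain ⟨p, hp⟩ := Finset.not_subset.mp hsub
    exact ⟨n1, p, ⟨AS e a r, rfl⟩, Nat.prime_of_mem_primeFactors hp.1,
      Nat.dvd_of_mem_primeFactors hp.1, hp.2⟩

end Core4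

section Core5
variable {k : ℕ} (e a : Fin k → ℕ)

lemma grow_primes (he : ∀ i, 0 < e i) (ha : ∀ i, 0 < a i)
    (hgcd : Finset.univ.gcd a = 1) (i2 : Fin k) (hi2 : 2 ≤ a i2)
    (hpos : ∀ n, 0 < AS e a n) :
    ∀ t : ℕ, ∃ (P : Finset ℕ) (r m : ℕ), P.card = t ∧ 0 < r ∧ 0 < m ∧
      (∀ p ∈ P, p.Prime ∧ ∀ i, ¬ p ∣ a i) ∧
      (∀ p ∈ P, ∀ j : ℕ, p ∣ AS e a (r + j * m)) := by
  classical
  intro t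
  induction t with
  | zero => exact ⟨∅, 1, 1, rfl, one_pos, one_pos, by simp, by simp⟩
  | succ t iht =>
    obtain ⟨P, r, m, hcard, hr, hm, hPprime, hPdvd⟩ := iht
    set S : Finset ℕ := P ∪ Finset.univ.biUnion (fun i => (a i).primeFactors) with hSdef
    have hSprime : ∀ q ∈ S, q.Prime := by
      intro q hq
      rcases Finset.mem_union.mp hq with h | h
      · exact (hPprime q h).1
      · obtain ⟨i, _, hqi⟩ := Finset.mem_biUnion.mp h
        exact Nat.prime_of_mem_primeFactors hqi
    obtain ⟨r1, m1, hm1, hr1, ⟨j0, hj0⟩, ⟨d0, hd0⟩, hconst⟩ :=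
      refine_set e a he hgcd hpos S hSprime r m hm hr
    obtain ⟨n1, p, ⟨j1, hj1⟩, hpprime, hpdvd, hpS⟩ :=
      find_new_prime e a i2 hi2 he hpos S hSprime r1 m1 hm1 hconst
    have hpP : p ∉ P := fun h => hpS (Finset.mem_union_left _ h)
    have hpa : ∀ i, ¬ p ∣ a i := by
      intro i hdvd
      apply hpS
      apply Finset.mem_union_right
      exact Finset.mem_biUnion.mpr ⟨i, Finset.mem_univ i,
        Nat.mem_primeFactors.mpr ⟨hpprime, hdvd, (ha i).ne'⟩⟩
    refine ⟨insert p P, n1, m1 * (p - 1), ?_, ?_, ?_, ?_, ?_⟩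
    · rw [Finset.card_insert_of_notMem hpP, hcard]
    · rw [hj1]; omega
    · have h2 := hpprime.two_le
      exact Nat.mul_pos hm1 (by omega)
    · intro p' hp'
      rcases Finset.mem_insert.mp hp' with rfl | h
      · exact ⟨hpprime, hpa⟩
      · exact hPprime p' h
    · intro p' hp' j
      rcases Finset.mem_insert.mp hp' with rfl | h
      · -- the new prime
        have hKn1 : 1 ≤ n1 := by rw [hj1]; omega
        have hmod : AS e a (n1 + (j * m1) * Nat.totient (p' ^ 1)) ≡ AS e a n1
            [MOD p' ^ 1] := AS_congr e a hpprime 1 n1 (j * m1) hKn1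
        have htot : Nat.totient (p' ^ 1) = p' - 1 := by
          rw [pow_one, Nat.totient_prime hpprime]
        rw [htot, pow_one] at hmod
        have harith : n1 + j * (m1 * (p' - 1)) = n1 + (j * m1) * (p' - 1) := by ring
        rw [harith]
        exact Nat.modEq_zero_iff_dvd.mp
          (hmod.trans (Nat.modEq_zero_iff_dvd.mpr hpdvd))
      · -- old primes
        have harith : n1 + j * (m1 * (p - 1)) = r + (j0 + (j1 + j * (p - 1)) * d0) * m := by
          rw [hj1, hj0, hd0]; ring
        rw [harith]
        exact hPdvd p' h _

/-- Core lemma: `ω(AS n)` is unbounded. -/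
lemma core_unbounded (he : ∀ i, 0 < e i) (ha : ∀ i, 0 < a i)
    (hgcd : Finset.univ.gcd a = 1) (i2 : Fin k) (hi2 : 2 ≤ a i2) (M : ℕ) :
    ∃ n, 1 ≤ n ∧ M < (AS e a n).primeFactors.card := by
  have hpos : ∀ n, 0 < AS e a n := by
    intro n
    unfold AS
    calc 0 < e i2 * a i2 ^ n := Nat.mul_pos (he i2) (pow_pos (ha i2) n)
      _ ≤ ∑ i, e i * a i ^ n :=
        Finset.single_le_sum (f := fun i => e i * a i ^ n)
          (fun i _ => Nat.zero_le _) (Finset.mem_univ i2)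
  obtain ⟨P, r, m, hcard, hr, hm, hPprime, hPdvd⟩ :=
    grow_primes e a he ha hgcd i2 hi2 hpos (M + 1)
  refine ⟨r, hr, ?_⟩
  have hsub : P ⊆ (AS e a r).primeFactors := by
    intro p hp
    have := hPdvd p hp 0
    simp only [Nat.zero_mul, Nat.add_zero] at this
    exact Nat.mem_primeFactors.mpr ⟨(hPprime p hp).1, this, (hpos r).ne'⟩
  have := Finset.card_le_card hsub
  omega

end Core5

lemma rat_num_eq_mul_den (r : ℚ) : (r.num : ℚ) = r * (r.den : ℚ) := by
  have hden : (r.den : ℚ) ≠ 0 := Nat.cast_ne_zero.mpr r.den_nz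
  field_simp [Rat.num_div_den r]
  exact (Rat.mul_den_eq_num r).symm

/-- Clearing denominators for a family of positive rationals. -/
lemma cast_clear {k : ℕ} (g : Fin k → ℚ) (hg : ∀ i, 0 < g i) (i : Fin k) :
    (((g i).num.natAbs * ∏ j ∈ Finset.univ.erase i, (g j).den : ℕ) : ℚ)
      = g i * ((∏ j, (g j).den : ℕ) : ℚ) := by
  push_cast
  have hnum : (((g i).num.natAbs : ℕ) : ℚ) = ((g i).num : ℚ) := by
    rw [Nat.cast_natAbs]
    exact congrArg (fun z : ℤ => (z : ℚ)) (abs_of_pos (Rat.num_pos.mpr (hg i)))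
  rw [hnum, rat_num_eq_mul_den (g i),
    ← Finset.mul_prod_erase Finset.univ (fun j => ((g j).den : ℚ)) (Finset.mem_univ i)]
  ring

/-- If `c₁,…,c_k` are positive rationals and `x₁,…,x_k` nonzero
rationals, and the sequence `n ↦ ω(c₁x₁^n + ⋯ + c_k x_k^n)` is bounded (in
particular the sums are nonzero), then `|x₁| = ⋯ = |x_k|`. -/
theorem abs_eq_of_omega_bounded (k : ℕ) (c x : Fin k → ℚ)
    (hc : ∀ i, 0 < c i) (hx : ∀ i, x i ≠ 0)
    (hbd : ∃ M : ℕ, ∀ n : ℕ, 1 ≤ n →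
      (∑ i, c i * x i ^ n) ≠ 0 ∧ ratOmega (∑ i, c i * x i ^ n) ≤ M) :
    ∀ i j, |x i| = |x j| := by
  classical
  by_contra hcon
  push_neg at hcon
  obtain ⟨i0, j0, hne⟩ := hcon
  obtain ⟨M, hM⟩ := hbd
  set y : Fin k → ℚ := fun i => x i ^ 2 with hy
  have hypos : ∀ i, 0 < y i := fun i => pow_two_pos_of_ne_zero (hx i)
  set f : ℕ := ∏ i, (c i).den with hf
  set q0 : ℕ := ∏ i, (y i).den with hq0
  have hfpos : 0 < f := Finset.prod_pos fun i _ => (c i).pos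
  have hq0pos : 0 < q0 := Finset.prod_pos fun i _ => (y i).pos
  set e : Fin k → ℕ := fun i => (c i).num.natAbs * ∏ j ∈ Finset.univ.erase i, (c j).den
    with he
  set a : Fin k → ℕ := fun i => (y i).num.natAbs * ∏ j ∈ Finset.univ.erase i, (y j).den
    with ha
  have hce : ∀ i, ((e i : ℕ) : ℚ) = c i * (f : ℚ) := fun i => cast_clear c hc i
  have hya : ∀ i, ((a i : ℕ) : ℚ) = y i * (q0 : ℚ) := fun i => cast_clear y hypos i
  have hepos : ∀ i, 0 < e i := by
    intro i
    apply Nat.mul_pos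
    · exact Int.natAbs_pos.mpr (Rat.num_pos.mpr (hc i)).ne'
    · exact Finset.prod_pos fun j _ => (c j).pos
  have hapos : ∀ i, 0 < a i := by
    intro i
    apply Nat.mul_pos
    · exact Int.natAbs_pos.mpr (Rat.num_pos.mpr (hypos i)).ne'
    · exact Finset.prod_pos fun j _ => (y j).pos
  -- a i0 ≠ a j0
  have hane : a i0 ≠ a j0 := by
    intro heq
    apply hne
    have : ((a i0 : ℕ) : ℚ) = ((a j0 : ℕ) : ℚ) := by exact_mod_cast heq
    rw [hya i0, hya j0] at this
    have hq0ne : (q0 : ℚ) ≠ 0 := Nat.cast_ne_zero.mpr hq0pos.ne'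
    have hyy : y i0 = y j0 := mul_right_cancel₀ hq0ne this
    exact (sq_eq_sq_iff_abs_eq_abs (x i0) (x j0)).mp hyy
  -- divide by gcd
  set d : ℕ := Finset.univ.gcd a with hd
  set a' : Fin k → ℕ := fun i => a i / Finset.univ.gcd a with ha'
  have hgcd' : Finset.univ.gcd a' = 1 :=
    Finset.gcd_div_eq_one (Finset.mem_univ i0) (hapos i0).ne'
  have hda : ∀ i, a i = d * a' i := fun i =>
    (Nat.div_mul_cancel (Finset.gcd_dvd (Finset.mem_univ i))).symm.trans (mul_comm _ _)
  have hdpos : 0 < d := by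
    have h1 := hda i0
    have h2 := hapos i0
    rcases Nat.eq_zero_or_pos d with h | h
    · rw [h, Nat.zero_mul] at h1; omega
    · exact h
  have ha'pos : ∀ i, 0 < a' i := by
    intro i
    have h1 := hda i
    have h2 := hapos i
    rcases Nat.eq_zero_or_pos (a' i) with h | h
    · rw [h, Nat.mul_zero] at h1; omega
    · exact h
  have ha'ne : a' i0 ≠ a' j0 := by
    intro h
    apply hane
    rw [hda i0, hda j0, h]
  have hi2 : ∃ i2, 2 ≤ a' i2 := by
    rcases Nat.lt_or_ge (a' i0) 2 with h | h
    · have h1 := ha'pos i0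
      have h2 := ha'pos j0
      have h3 := ha'ne
      exact ⟨j0, by omega⟩
    · exact ⟨i0, h⟩
  obtain ⟨i2, hi2⟩ := hi2
  -- the key rational identity
  have key : ∀ n : ℕ, ((AS e a n : ℕ) : ℚ)
      = (f : ℚ) * (q0 : ℚ) ^ n * ∑ i, c i * x i ^ (2 * n) := by
    intro n
    unfold AS
    push_cast
    rw [Finset.mul_sum]
    apply Finset.sum_congr rfl
    intro i _
    have h1 : ((e i : ℕ) : ℚ) = c i * (f : ℚ) := hce i
    have h2 : ((a i : ℕ) : ℚ) = y i * (q0 : ℚ) := hya i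
    push_cast at h1 h2
    rw [h1, h2, mul_pow]
    have h3 : y i ^ n = x i ^ (2 * n) := by rw [hy]; rw [← pow_mul]
    rw [h3]
    ring
  -- relation between AS e a and AS e a'
  have hASrel : ∀ n, AS e a n = d ^ n * AS e a' n := by
    intro n
    unfold AS
    rw [Finset.mul_sum]
    apply Finset.sum_congr rfl
    intro i _
    rw [hda i, mul_pow]
    ring
  have hAS'pos : ∀ n, 0 < AS e a' n := by
    intro n
    unfold AS
    calc 0 < e i2 * a' i2 ^ n := Nat.mul_pos (hepos i2) (pow_pos (ha'pos i2) n)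
      _ ≤ ∑ i, e i * a' i ^ n :=
        Finset.single_le_sum (f := fun i => e i * a' i ^ n)
          (fun i _ => Nat.zero_le _) (Finset.mem_univ i2)
  -- prime factor bound for AS e a' n, n ≥ 1
  have hbound : ∀ n, 1 ≤ n →
      (AS e a' n).primeFactors.card ≤ f.primeFactors.card + q0.primeFactors.card + M := by
    intro n hn
    set Sn : ℚ := ∑ i, c i * x i ^ (2 * n) with hSn
    obtain ⟨hSne, hSomega⟩ := hM (2 * n) (by omega)
    have hSpos : 0 < Sn := by
      apply Finset.sum_pos
      · intro i _
        apply mul_pos (hc i)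
        rw [pow_mul]
        exact pow_pos (pow_two_pos_of_ne_zero (hx i)) n
      · exact ⟨i0, Finset.mem_univ i0⟩
    have hnum : (((Sn.num.natAbs : ℕ) : ℚ)) = (Sn.num : ℚ) := by
      rw [Nat.cast_natAbs]
      exact congrArg (fun z : ℤ => (z : ℚ)) (abs_of_pos (Rat.num_pos.mpr hSpos))
    -- integer identity
    have hNat : AS e a n * Sn.den = f * q0 ^ n * Sn.num.natAbs := by
      have hQ : ((AS e a n * Sn.den : ℕ) : ℚ) = ((f * q0 ^ n * Sn.num.natAbs : ℕ) : ℚ) := by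
        push_cast
        rw [key n, ← hSn]
        have : Sn * (Sn.den : ℚ) = (Sn.num : ℚ) := (rat_num_eq_mul_den Sn).symm
        push_cast at hnum ⊢
        rw [mul_assoc, this, hnum]
      exact_mod_cast hQ
    have hASpos : 0 < AS e a n := by
      rw [hASrel n]
      exact Nat.mul_pos (pow_pos hdpos n) (hAS'pos n)
    have hsub1 : (AS e a' n).primeFactors ⊆ (AS e a n).primeFactors := by
      apply Nat.primeFactors_mono _ hASpos.ne'
      exact ⟨d ^ n, by rw [hASrel n]; ring⟩
    have hsub2 : (AS e a n).primeFactors ⊆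
        f.primeFactors ∪ q0.primeFactors ∪ Sn.num.natAbs.primeFactors := by
      intro p hp
      have hpprime : p.Prime := Nat.prime_of_mem_primeFactors hp
      have hpdvd : p ∣ AS e a n := Nat.dvd_of_mem_primeFactors hp
      have : p ∣ f * q0 ^ n * Sn.num.natAbs := by
        rw [← hNat]
        exact hpdvd.mul_right _
      rcases (Nat.Prime.dvd_mul hpprime).mp this with h | h
      · rcases (Nat.Prime.dvd_mul hpprime).mp h with h' | h'
        · exact Finset.mem_union_left _ (Finset.mem_union_left _
            (Nat.mem_primeFactors.mpr ⟨hpprime, h', hfpos.ne'⟩))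
        · exact Finset.mem_union_left _ (Finset.mem_union_right _
            (Nat.mem_primeFactors.mpr ⟨hpprime, hpprime.dvd_of_dvd_pow h', hq0pos.ne'⟩))
      · refine Finset.mem_union_right _ (Nat.mem_primeFactors.mpr ⟨hpprime, h, ?_⟩)
        exact Int.natAbs_ne_zero.mpr (Rat.num_ne_zero.mpr hSne)
    calc (AS e a' n).primeFactors.card
        ≤ ((f.primeFactors ∪ q0.primeFactors) ∪ Sn.num.natAbs.primeFactors).card :=
          Finset.card_le_card (hsub1.trans hsub2)
      _ ≤ (f.primeFactors ∪ q0.primeFactors).card + Sn.num.natAbs.primeFactors.card :=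
          Finset.card_union_le _ _
      _ ≤ f.primeFactors.card + q0.primeFactors.card + Sn.num.natAbs.primeFactors.card := by
          have := Finset.card_union_le f.primeFactors q0.primeFactors
          omega
      _ ≤ f.primeFactors.card + q0.primeFactors.card + M := by
          have : Sn.num.natAbs.primeFactors.card ≤ M := by
            have h := hSomega
            rw [← hSn] at h
            unfold ratOmega at h
            omega
          omega
  -- contradiction with core_unbounded
  obtain ⟨n, hn1, hnbig⟩ := core_unbounded e a' hepos ha'pos hgcd' i2 hi2
    (f.primeFactors.card + q0.primeFactors.card + M)
  exact absurd (hbound n hn1) (by omega)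
end

section
/- Let c₁,…,c_k and x₁,…,x_k be positive integers. The sequence n ↦ ω(c₁x₁^n + ⋯ + c_k x_k^n) is bounded if and only if x₁ = x₂ = ⋯ = x_k. -/
open Finset

lemma descartes : ∀ (m : ℕ) (γ : Fin m → ℝ) (e : Fin m → ℕ), Function.Injective e →
    ∀ R : Finset ℝ, (∀ x ∈ R, 0 < x) → m ≤ R.card →
    (∀ x ∈ R, ∑ j, γ j * x ^ e j = 0) → ∀ j, γ j = 0 := by
  intro m
  induction m with
  | zero => intro γ e _ R _ _ _ j; exact j.elim0
  | succ m IH =>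
    intro γ e he R hRpos hcard hroot
    -- minimal exponent index
    obtain ⟨j₀, -, hj₀⟩ := Finset.exists_min_image Finset.univ e ⟨0, Finset.mem_univ 0⟩
    have hgt : ∀ j, j ≠ j₀ → e j₀ < e j := by
      intro j hj
      exact lt_of_le_of_ne (hj₀ j (Finset.mem_univ j)) (fun h => hj (he h.symm))
    set f : ℝ → ℝ := fun t => ∑ j, γ j * t ^ (e j - e j₀) with hf
    set f' : ℝ → ℝ := fun t =>
      ∑ j, γ j * (((e j - e j₀ : ℕ) : ℝ) * t ^ (e j - e j₀ - 1)) with hf'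
    have hderiv : ∀ t : ℝ, HasDerivAt f (f' t) t := by
      intro t
      apply HasDerivAt.fun_sum
      intro j _
      exact (hasDerivAt_pow (e j - e j₀) t).const_mul (γ j)
    have hcont : Continuous f := by
      apply continuous_finset_sum
      intro j _
      exact continuous_const.mul (continuous_pow (e j - e j₀))
    have hfR : ∀ x ∈ R, f x = 0 := by
      intro x hx
      have hx0 : x ≠ 0 := ne_of_gt (hRpos x hx)
      have expand : f x * x ^ e j₀ = ∑ j, γ j * x ^ e j := by
        rw [hf]
        rw [Finset.sum_mul]
        apply Finset.sum_congr rfl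
        intro j _
        rw [mul_assoc, ← pow_add, Nat.sub_add_cancel (hj₀ j (Finset.mem_univ j))]
      have := hroot x hx
      rw [← expand] at this
      rcases mul_eq_zero.1 this with h | h
      · exact h
      · exact absurd h (pow_ne_zero _ hx0)
    -- pick m+1 roots
    obtain ⟨R', hR'sub, hR'card⟩ := Finset.exists_subset_card_eq hcard
    set xs : Fin (m + 1) → ℝ := fun i => ((R'.orderIsoOfFin hR'card) i : ℝ) with hxs
    have hxsmono : StrictMono xs := by
      intro i i' hii'
      exact (R'.orderIsoOfFin hR'card).strictMono hii'
    have hxsR : ∀ i, xs i ∈ R := fun i => hR'sub ((R'.orderIsoOfFin hR'card) i).2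
    have hrolle : ∀ i : Fin m, ∃ y, y ∈ Set.Ioo (xs i.castSucc) (xs i.succ) ∧ f' y = 0 := by
      intro i
      have hab : xs i.castSucc < xs i.succ := hxsmono (Fin.castSucc_lt_succ (i := i))
      obtain ⟨y, hy1, hy2⟩ := exists_hasDerivAt_eq_zero hab hcont.continuousOn
        (by rw [hfR _ (hxsR i.castSucc), hfR _ (hxsR i.succ)])
        (fun x _ => hderiv x)
      exact ⟨y, hy1, hy2⟩
    choose y hy hfy using hrolle
    have hymono : StrictMono y := by
      intro i i' hii'
      calc y i < xs i.succ := (hy i).2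
        _ ≤ xs i'.castSucc := by
            apply hxsmono.monotone
            rw [Fin.succ_le_castSucc_iff]
            exact hii'
        _ < y i' := (hy i').1
    have hypos : ∀ i, 0 < y i := fun i =>
      lt_trans (hRpos _ (hxsR i.castSucc)) (hy i).1
    -- new system
    set γ' : Fin m → ℝ := fun jj =>
      γ (j₀.succAbove jj) * ((e (j₀.succAbove jj) - e j₀ : ℕ) : ℝ) with hγ'
    set e' : Fin m → ℕ := fun jj => e (j₀.succAbove jj) - e j₀ - 1 with he'
    have he'inj : Function.Injective e' := by
      intro a b hab
      have ha := hgt _ (Fin.succAbove_ne j₀ a)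
      have hb := hgt _ (Fin.succAbove_ne j₀ b)
      simp only [he'] at hab
      have : e (j₀.succAbove a) = e (j₀.succAbove b) := by omega
      exact (Fin.succAbove_right_injective) (he this)
    have hroot' : ∀ x ∈ Finset.image y Finset.univ, ∑ jj, γ' jj * x ^ e' jj = 0 := by
      intro x hx
      obtain ⟨i, -, rfl⟩ := Finset.mem_image.1 hx
      have h0 := hfy i
      simp only [hf'] at h0
      rw [Fin.sum_univ_succAbove
        (fun j => γ j * (((e j - e j₀ : ℕ) : ℝ) * (y i) ^ (e j - e j₀ - 1))) j₀] at h0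
      simp only [Nat.sub_self, Nat.cast_zero, zero_mul, mul_zero, zero_add] at h0
      rw [← h0]
      apply Finset.sum_congr rfl
      intro jj _
      rw [hγ', he']
      ring
    have hymem : m ≤ (Finset.image y Finset.univ).card := by
      rw [Finset.card_image_of_injective _ hymono.injective, Finset.card_univ, Fintype.card_fin]
    have hzero' := IH γ' e' he'inj (Finset.image y Finset.univ)
      (by intro x hx; obtain ⟨i, -, rfl⟩ := Finset.mem_image.1 hx; exact hypos i)
      hymem hroot'
    have hγoff : ∀ jj : Fin m, γ (j₀.succAbove jj) = 0 := by
      intro jj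
      have h := hzero' jj
      rw [hγ'] at h
      rcases mul_eq_zero.1 h with h | h
      · exact h
      · exfalso
        have := hgt _ (Fin.succAbove_ne j₀ jj)
        have : ((e (j₀.succAbove jj) - e j₀ : ℕ) : ℝ) ≠ 0 := by
          exact_mod_cast Nat.sub_ne_zero_of_lt this
        exact this h
    have hj₀zero : γ j₀ = 0 := by
      have hR'ne : R'.Nonempty := Finset.card_pos.1 (by omega)
      obtain ⟨x₀, hx₀⟩ := hR'ne
      have hx₀R := hR'sub hx₀
      have h := hroot x₀ hx₀R
      rw [Fin.sum_univ_succAbove (fun j => γ j * x₀ ^ e j) j₀] at h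
      have : ∑ jj : Fin m, γ (j₀.succAbove jj) * x₀ ^ e (j₀.succAbove jj) = 0 := by
        apply Finset.sum_eq_zero; intro jj _; rw [hγoff jj, zero_mul]
      rw [this, add_zero] at h
      rcases mul_eq_zero.1 h with h | h
      · exact h
      · exact absurd h (pow_ne_zero _ (ne_of_gt (hRpos x₀ hx₀R)))
    intro j
    rcases eq_or_ne j j₀ with rfl | hne
    · exact hj₀zero
    · obtain ⟨jj, rfl⟩ := Fin.exists_succAbove_eq hne
      exact hγoff jj

lemma genVandermonde_det_ne_zero (r : ℕ) (W : Fin r → ℕ) (o : Fin r → ℕ)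
    (hWpos : ∀ i, 0 < W i) (hWinj : Function.Injective W) (hoinj : Function.Injective o) :
    (Matrix.of (fun i j : Fin r => (W i : ℤ) ^ o j)).det ≠ 0 := by
  intro hdet
  set M : Matrix (Fin r) (Fin r) ℤ := Matrix.of (fun i j : Fin r => (W i : ℤ) ^ o j) with hM
  set Mr : Matrix (Fin r) (Fin r) ℝ := M.map (Int.cast : ℤ → ℝ) with hMr
  have hdetr : Mr.det = 0 := by
    have : Mr = (Int.castRingHom ℝ).mapMatrix M := rfl
    rw [this, ← RingHom.map_det (Int.castRingHom ℝ) M, hdet, RingHom.map_zero]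
  obtain ⟨v, hv0, hvz⟩ := (Matrix.exists_mulVec_eq_zero_iff).2 hdetr
  have hWr : Function.Injective (fun i : Fin r => (W i : ℝ)) := by
    intro a b hab
    exact hWinj (Nat.cast_injective hab)
  have hcard : r ≤ (Finset.image (fun i : Fin r => (W i : ℝ)) Finset.univ).card := by
    rw [Finset.card_image_of_injective _ hWr, Finset.card_univ, Fintype.card_fin]
  have hroots : ∀ x ∈ Finset.image (fun i : Fin r => (W i : ℝ)) Finset.univ,
      ∑ j, v j * x ^ o j = 0 := by
    intro x hx
    obtain ⟨i, -, rfl⟩ := Finset.mem_image.1 hx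
    have := congrFun hvz i
    rw [Matrix.mulVec, dotProduct] at this
    rw [Pi.zero_apply] at this
    rw [← this]
    apply Finset.sum_congr rfl
    intro j _
    simp only [hMr, hM, Matrix.map_apply, Matrix.of_apply]
    push_cast
    ring
  have := descartes r v o hoinj _
    (by intro x hx; obtain ⟨i, -, rfl⟩ := Finset.mem_image.1 hx; exact_mod_cast hWpos i)
    hcard hroots
  exact hv0 (funext this)

lemma elim_contra (r : ℕ) (A W : Fin r → ℕ) (hA : ∀ i, 0 < A i) (hW : ∀ i, 0 < W i)
    (hWinj : Function.Injective W) (q : ℕ) (hq : q.Prime) (istar : Fin r) (hqW : ¬ q ∣ W istar)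
    (o : Fin r → ℕ) (hoinj : Function.Injective o) (n : ℕ)
    (hdvd : ∀ j : Fin r, q ^ ((A istar *
        ((Matrix.of (fun i j : Fin r => (W i : ℤ) ^ o j)).det).natAbs).factorization q + 1) ∣
        ∑ i, A i * W i ^ (n + o j)) : False := by
  set M : Matrix (Fin r) (Fin r) ℤ := Matrix.of (fun i j : Fin r => (W i : ℤ) ^ o j) with hM
  set D : ℤ := M.det with hD
  set c : ℕ := (A istar * D.natAbs).factorization q + 1 with hc
  have hDne : D ≠ 0 := genVandermonde_det_ne_zero r W o hW hWinj hoinj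
  have hMadj : ∀ i i' : Fin r, ∑ j, M i j * M.adjugate j i' = if i = i' then D else 0 := by
    intro i i'
    have h1 : (M * M.adjugate) i i' = (D • (1 : Matrix (Fin r) (Fin r) ℤ)) i i' := by
      rw [Matrix.mul_adjugate M]
    rw [Matrix.mul_apply] at h1
    rw [h1, Matrix.smul_apply, Matrix.one_apply]
    split <;> simp
  have key : ∑ j, M.adjugate j istar * ((∑ i, A i * W i ^ (n + o j) : ℕ) : ℤ) =
      (A istar : ℤ) * (W istar : ℤ) ^ n * D := by
    have : ∀ j : Fin r, M.adjugate j istar * ((∑ i, A i * W i ^ (n + o j) : ℕ) : ℤ) =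
        ∑ i, (A i : ℤ) * (W i : ℤ) ^ n * (M i j * M.adjugate j istar) := by
      intro j
      push_cast
      rw [Finset.mul_sum]
      apply Finset.sum_congr rfl
      intro i _
      simp only [hM, Matrix.of_apply]
      rw [pow_add]
      ring
    rw [Finset.sum_congr rfl (fun j _ => this j), Finset.sum_comm]
    rw [Finset.sum_congr rfl (fun i (_ : i ∈ Finset.univ) => (Finset.mul_sum _ _ _).symm)]
    rw [Finset.sum_congr rfl (fun i (_ : i ∈ Finset.univ) => by rw [hMadj i istar])]
    rw [Finset.sum_eq_single istar]
    · simp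
    · intro i _ hne; simp [hne]
    · intro h; exact absurd (Finset.mem_univ istar) h
  have hdvdZ : (q : ℤ) ^ c ∣ (A istar : ℤ) * (W istar : ℤ) ^ n * D := by
    rw [← key]
    apply Finset.dvd_sum
    intro j _
    apply Dvd.dvd.mul_left
    exact_mod_cast Int.natCast_dvd_natCast.2 (hdvd j)
  have hdvdN : q ^ c ∣ A istar * W istar ^ n * D.natAbs := by
    have := Int.natAbs_dvd_natAbs.2 hdvdZ
    simpa [Int.natAbs_mul, Int.natAbs_pow] using this
  have hcop : (q ^ c).Coprime (W istar ^ n) :=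
    (hq.coprime_iff_not_dvd.2 hqW).pow _ _
  have hdvdfin : q ^ c ∣ A istar * D.natAbs := by
    apply Nat.Coprime.dvd_of_dvd_mul_right hcop
    have : A istar * W istar ^ n * D.natAbs = A istar * D.natAbs * W istar ^ n := by ring
    rwa [this] at hdvdN
  have hne : A istar * D.natAbs ≠ 0 := by
    have := hA istar
    have : D.natAbs ≠ 0 := Int.natAbs_ne_zero.2 hDne
    positivity
  rw [Nat.Prime.pow_dvd_iff_le_factorization hq hne] at hdvdfin
  omega

lemma lemA (r : ℕ) (hr : 2 ≤ r) (A Wf : Fin r → ℕ) (hA : ∀ i, 0 < A i) (hWf : ∀ i, 0 < Wf i)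
    (hWfinj : Function.Injective Wf) (T : Finset ℕ) (hT : ∀ q ∈ T, q.Prime) :
    ∃ m, 1 ≤ m ∧ ∃ p, p.Prime ∧ p ∉ T ∧ p ∣ ∑ i, A i * Wf i ^ m := by
  by_contra hcon
  push_neg at hcon
  have hr0 : 0 < r := by omega
  have hr1 : 1 < r := by omega
  set g : ℕ := Finset.gcd Finset.univ Wf with hg
  have hgdvd : ∀ i, g ∣ Wf i := fun i => Finset.gcd_dvd (mem_univ i)
  have hgpos : 0 < g := by
    rcases Nat.eq_zero_or_pos g with h | h
    · exfalso
      have := Finset.gcd_eq_zero_iff.1 h ⟨0, hr0⟩ (mem_univ _)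
      exact (hWf ⟨0, hr0⟩).ne' this
    · exact h
  set W : Fin r → ℕ := fun i => Wf i / g with hW
  have hWfeq : ∀ i, Wf i = g * W i := fun i => (Nat.mul_div_cancel' (hgdvd i)).symm
  have hWpos : ∀ i, 0 < W i := fun i =>
    Nat.div_pos (Nat.le_of_dvd (hWf i) (hgdvd i)) hgpos
  have hWinj : Function.Injective W := by
    intro a b hab
    apply hWfinj
    rw [hWfeq a, hWfeq b, hab]
  have hgcdW : Finset.gcd Finset.univ W = 1 := by
    have hdvd1 : g * Finset.gcd Finset.univ W ∣ g * 1 := by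
      rw [mul_one]
      apply Finset.dvd_gcd
      intro i _
      rw [hWfeq i]
      exact mul_dvd_mul_left g (Finset.gcd_dvd (mem_univ i))
    exact Nat.dvd_one.1 ((mul_dvd_mul_iff_left hgpos.ne').1 hdvd1)
  set u : ℕ → ℕ := fun m => ∑ i, A i * W i ^ m with hu
  have hupos : ∀ m, 0 < u m :=
    fun m => Finset.sum_pos (fun i _ => by have := hA i; have := hWpos i; positivity)
      ⟨⟨0, hr0⟩, mem_univ _⟩
  have hs : ∀ m, ∑ i, A i * Wf i ^ m = g ^ m * u m := by
    intro m
    rw [hu, Finset.mul_sum]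
    apply Finset.sum_congr rfl
    intro i _
    rw [hWfeq i, mul_pow]
    ring
  have huT : ∀ m, 1 ≤ m → ∀ p, p.Prime → p ∣ u m → p ∈ T := by
    intro m hm p hp hpd
    by_contra hpT
    exact hcon m hm p hp hpT (hpd.trans (by rw [hs m]; exact dvd_mul_left _ _))
  have histar : ∀ q ∈ T, ∃ i, ¬ q ∣ W i := by
    intro q hqT
    by_contra hall
    push_neg at hall
    have hq1 : q ∣ 1 := by
      rw [← hgcdW]
      exact Finset.dvd_gcd (fun i _ => hall i)
    exact (hT q hqT).one_lt.ne' (Nat.dvd_one.1 hq1)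
  choose istar histar2 using histar
  set t : ℕ := T.card with ht
  set L : ℕ := t * (r - 1) + 1 with hL
  set Cq : ℕ → ℕ := fun q => (Finset.univ (α := Fin r) ×ˢ
      (Finset.univ.filter (Function.Injective (β := Fin L)))).sup
      (fun pr => (A pr.1 * ((Matrix.of (fun i j : Fin r =>
        (W i : ℤ) ^ ((pr.2 j : ℕ)))).det).natAbs).factorization q) with hCq
  set B : ℕ := ∏ q ∈ T, q ^ (Cq q + 1) with hB
  have hBpos : 0 < B := Finset.prod_pos (fun q hq => pow_pos (hT q hq).pos _)
  set Bad : ℕ → Finset ℕ := fun q => (Finset.range L).filter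
    (fun l => q ^ (Cq q + 1) ∣ u (B + l)) with hBad
  have hbad : ∀ q ∈ T, (Bad q).card < r := by
    intro q hqT
    by_contra hge
    push_neg at hge
    obtain ⟨P, hPsub, hPcard⟩ := Finset.exists_subset_card_eq hge
    have hPL : ∀ x ∈ P, x < L := by
      intro x hx
      have := hPsub hx
      rw [hBad, mem_filter, mem_range] at this
      exact this.1
    set o : Fin r → ℕ := fun j => P.orderEmbOfFin hPcard j with ho
    have hoinj : Function.Injective o := fun a b hab =>
      (P.orderEmbOfFin hPcard).injective hab
    have homem : ∀ j, o j ∈ P := fun j => Finset.orderEmbOfFin_mem P hPcard j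
    apply elim_contra r A W hA hWpos hWinj q (hT q hqT) (istar q hqT) (histar2 q hqT)
      o hoinj B
    intro j
    have hle : (A (istar q hqT) * ((Matrix.of (fun i j : Fin r =>
        (W i : ℤ) ^ o j)).det).natAbs).factorization q ≤ Cq q := by
      rw [hCq]
      have hmem : (istar q hqT, fun j => (⟨o j, hPL _ (homem j)⟩ : Fin L)) ∈
          Finset.univ (α := Fin r) ×ˢ (Finset.univ.filter (Function.Injective (β := Fin L))) := by
        rw [Finset.mem_product, Finset.mem_filter]
        refine ⟨mem_univ _, mem_univ _, ?_⟩
        intro a b hab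
        apply hoinj
        have := congrArg (Fin.val) hab
        exact this
      exact Finset.le_sup (f := fun pr : Fin r × (Fin r → Fin L) =>
        (A pr.1 * ((Matrix.of (fun i j : Fin r =>
          (W i : ℤ) ^ ((pr.2 j : ℕ)))).det).natAbs).factorization q) hmem
    have hdvd : q ^ (Cq q + 1) ∣ u (B + o j) := by
      have := hPsub (homem j)
      rw [hBad, mem_filter] at this
      exact this.2
    exact dvd_trans (pow_dvd_pow q (Nat.succ_le_succ hle)) hdvd
  -- find a good point
  have hcover : ∃ l, l ∈ Finset.range L ∧ ∀ q ∈ T, l ∉ Bad q := by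
    set BadU : Finset ℕ := T.biUnion Bad with hBadU
    have hcard1 : BadU.card ≤ t * (r - 1) := by
      calc BadU.card ≤ ∑ q ∈ T, (Bad q).card := Finset.card_biUnion_le
        _ ≤ ∑ _q ∈ T, (r - 1) := Finset.sum_le_sum (fun q hq => by have := hbad q hq; omega)
        _ = t * (r - 1) := by rw [Finset.sum_const, ht, smul_eq_mul]
    have hnsub : ¬ (Finset.range L ⊆ BadU) := by
      intro hsub
      have := Finset.card_le_card hsub
      rw [Finset.card_range, hL] at this
      omega
    obtain ⟨l, hl, hlnot⟩ := Finset.not_subset.1 hnsub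
    exact ⟨l, hl, fun q hq hmem => hlnot (Finset.mem_biUnion.2 ⟨q, hq, hmem⟩)⟩
  obtain ⟨l, hlL, hlgood⟩ := hcover
  set m' : ℕ := B + l with hm'
  have hm'1 : 1 ≤ m' := by omega
  have hfacle : ∀ q ∈ T, (u m').factorization q ≤ Cq q := by
    intro q hq
    by_contra hgt
    push_neg at hgt
    have hdvd : q ^ (Cq q + 1) ∣ u m' :=
      (Nat.Prime.pow_dvd_iff_le_factorization (hT q hq) (hupos m').ne').2 hgt
    exact hlgood q hq (by rw [hBad, mem_filter]; exact ⟨hlL, hdvd⟩)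
  have hsupp : ∀ q, q ∉ T → (u m').factorization q = 0 := by
    intro q hqT
    by_contra hne
    have hqsupp : q ∈ (u m').factorization.support := Finsupp.mem_support_iff.2 hne
    rw [Nat.support_factorization] at hqsupp
    rw [Nat.mem_primeFactors] at hqsupp
    exact hqT (huT m' hm'1 q hqsupp.1 hqsupp.2.1)
  have hBne : B ≠ 0 := hBpos.ne'
  have hdvdB : u m' ∣ B := by
    rw [← Nat.factorization_le_iff_dvd (hupos m').ne' hBne]
    rw [Finsupp.le_def]
    intro q
    rw [hB, Nat.factorization_prod (fun q' hq' => pow_ne_zero _ (hT q' hq').pos.ne')]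
    rw [Finset.sum_apply']
    by_cases hqT : q ∈ T
    · rw [Finset.sum_eq_single q
        (fun q' hq' hne => by
          rw [Nat.Prime.factorization_pow (hT q' hq')]
          exact Finsupp.single_eq_of_ne' hne)
        (fun h => absurd hqT h)]
      rw [Nat.Prime.factorization_pow (hT q hqT), Finsupp.single_eq_same]
      exact Nat.le_succ_of_le (hfacle q hqT)
    · rw [hsupp q hqT]
      exact Nat.zero_le _
  have huleB : u m' ≤ B := Nat.le_of_dvd hBpos hdvdB
  -- growth
  have h2 : ∃ i2, 2 ≤ W i2 := by
    by_contra hno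
    push_neg at hno
    have h0 : W ⟨0, hr0⟩ = 1 := by have := hWpos ⟨0, hr0⟩; have := hno ⟨0, hr0⟩; omega
    have h1 : W ⟨1, hr1⟩ = 1 := by have := hWpos ⟨1, hr1⟩; have := hno ⟨1, hr1⟩; omega
    have h01 : (⟨0, hr0⟩ : Fin r) = ⟨1, hr1⟩ := hWinj (by rw [h0, h1])
    simpa using h01
  obtain ⟨i2, hi2⟩ := h2
  have hgrowth : 2 ^ m' ≤ u m' := by
    calc 2 ^ m' ≤ W i2 ^ m' := Nat.pow_le_pow_left hi2 m'
      _ ≤ A i2 * W i2 ^ m' := Nat.le_mul_of_pos_left _ (hA i2)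
      _ ≤ u m' := Finset.single_le_sum (f := fun i => A i * W i ^ m')
          (fun i _ => Nat.zero_le _) (mem_univ i2)
  have hfin : 2 ^ B ≤ B := by
    calc 2 ^ B ≤ 2 ^ m' := Nat.pow_le_pow_right (by norm_num) (by omega)
      _ ≤ u m' := hgrowth
      _ ≤ B := huleB
  have := Nat.lt_two_pow_self (n := B)
  omega

lemma periodic_dvd (r : ℕ) (A V : Fin r → ℕ) (hV : ∀ i, 0 < V i) (p : ℕ) (hp : p.Prime)
    (ρ d : ℕ) (hρ : 1 ≤ ρ) (hd : (p - 1) ∣ d) (hdvd : p ∣ ∑ i, A i * V i ^ ρ) :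
    p ∣ ∑ i, A i * V i ^ (ρ + d) := by
  haveI : Fact p.Prime := ⟨hp⟩
  rw [← ZMod.natCast_eq_zero_iff] at hdvd ⊢
  push_cast at hdvd ⊢
  obtain ⟨e, rfl⟩ := hd
  have : ∀ i : Fin r, ((V i : ZMod p)) ^ (ρ + (p - 1) * e) = (V i : ZMod p) ^ ρ := by
    intro i
    by_cases h0 : (V i : ZMod p) = 0
    · rw [h0, zero_pow (by omega), zero_pow (by omega)]
    · rw [pow_add, pow_mul, ZMod.pow_card_sub_one_eq_one h0, one_pow, mul_one]
  rw [← hdvd]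
  apply Finset.sum_congr rfl
  intro i _
  rw [this i]

lemma build_primes (r : ℕ) (hr : 2 ≤ r) (a v : Fin r → ℕ) (ha : ∀ i, 0 < a i)
    (hv : ∀ i, 0 < v i) (hvinj : Function.Injective v) :
    ∀ M : ℕ, ∃ ρ Λ : ℕ, 1 ≤ ρ ∧ 1 ≤ Λ ∧ ∃ Q : Finset ℕ, Q.card = M ∧
      ∀ p ∈ Q, p.Prime ∧ p ∣ (∑ i, a i * v i ^ ρ) ∧ (p - 1) ∣ Λ := by
  intro M
  induction M with
  | zero => exact ⟨1, 1, le_refl 1, le_refl 1, ∅, rfl, fun p hp => absurd hp (notMem_empty p)⟩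
  | succ M IH =>
    obtain ⟨ρ, Λ, hρ, hΛ, Q, hQcard, hQ⟩ := IH
    obtain ⟨m₀, hm₀, p, hpprime, hpQ, hpdvd⟩ := lemA r hr
      (fun i => a i * v i ^ ρ) (fun i => v i ^ Λ)
      (fun i => by have := ha i; have := hv i; positivity)
      (fun i => pow_pos (hv i) Λ)
      ((Nat.pow_left_injective (by omega)).comp hvinj)
      Q (fun q hq => (hQ q hq).1)
    have hsum : ∑ i, (a i * v i ^ ρ) * (v i ^ Λ) ^ m₀ = ∑ i, a i * v i ^ (ρ + Λ * m₀) := by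
      apply Finset.sum_congr rfl
      intro i _
      rw [← pow_mul, mul_assoc, ← pow_add]
    refine ⟨ρ + Λ * m₀, Λ * (p - 1), by omega, ?_, insert p Q,
      Finset.card_insert_of_notMem hpQ ▸ by omega, ?_⟩
    · have : 2 ≤ p := hpprime.two_le
      have := Nat.one_le_iff_ne_zero.2 (Nat.sub_ne_zero_of_lt hpprime.one_lt)
      exact Nat.one_le_iff_ne_zero.2 (by positivity)
    · intro p' hp'
      rcases Finset.mem_insert.1 hp' with rfl | hp'Q
      · refine ⟨hpprime, ?_, dvd_mul_left _ _⟩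
        rwa [← hsum]
      · obtain ⟨hprime', hdvd', hper'⟩ := hQ p' hp'Q
        refine ⟨hprime', ?_, hper'.trans (Dvd.intro (p - 1) rfl)⟩
        · exact periodic_dvd r a v hv p' hprime' ρ (Λ * m₀) hρ
            (hper'.trans (Dvd.intro m₀ rfl)) hdvd'

/-- For positive integers `c₁,…,c_k, x₁,…,x_k`, the sequence
`n ↦ ω(c₁x₁^n + ⋯ + c_k x_k^n)` is bounded iff `x₁ = ⋯ = x_k`. -/
theorem omega_sum_pow_bounded_iff (k : ℕ) (c x : Fin k → ℕ)
    (hc : ∀ i, 0 < c i) (hx : ∀ i, 0 < x i) :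
    (∃ M : ℕ, ∀ n : ℕ, 1 ≤ n →
        (∑ i, c i * x i ^ n).primeFactors.card ≤ M) ↔ ∀ i j, x i = x j := by
  constructor
  · rintro ⟨M, hM⟩ i j
    by_contra hne
    -- group by values
    set V : Finset ℕ := Finset.image x Finset.univ with hV
    have hrge : 2 ≤ V.card := by
      apply Finset.one_lt_card.2
      exact ⟨x i, Finset.mem_image_of_mem x (mem_univ i),
        x j, Finset.mem_image_of_mem x (mem_univ j), hne⟩
    set r : ℕ := V.card with hr
    set v : Fin r → ℕ := fun jj => (V.orderIsoOfFin rfl jj : ℕ) with hv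
    have hvinj : Function.Injective v := by
      intro a b hab
      have := Subtype.ext hab
      exact (V.orderIsoOfFin rfl).injective this
    have hvmem : ∀ jj, v jj ∈ V := fun jj => (V.orderIsoOfFin rfl jj).2
    have hvpos : ∀ jj, 0 < v jj := by
      intro jj
      obtain ⟨i', -, hi'⟩ := Finset.mem_image.1 (hvmem jj)
      rw [← hi']
      exact hx i'
    set a : ℕ → ℕ := fun w => ∑ i' ∈ Finset.univ.filter (fun i' => x i' = w), c i' with ha
    have hapos : ∀ jj, 0 < a (v jj) := by
      intro jj
      obtain ⟨i', -, hi'⟩ := Finset.mem_image.1 (hvmem jj)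
      apply Finset.sum_pos (fun i'' _ => hc i'')
      exact ⟨i', Finset.mem_filter.2 ⟨mem_univ i', hi'⟩⟩
    have hsum : ∀ n, ∑ i', c i' * x i' ^ n = ∑ jj, a (v jj) * v jj ^ n := by
      intro n
      have h1 : ∑ w ∈ V, (∑ i' ∈ Finset.univ.filter (fun i' => x i' = w), c i' * x i' ^ n)
          = ∑ i', c i' * x i' ^ n :=
        Finset.sum_fiberwise_of_maps_to (fun i' _ => Finset.mem_image_of_mem x (mem_univ i')) _
      have h2 : ∀ w ∈ V, (∑ i' ∈ Finset.univ.filter (fun i' => x i' = w), c i' * x i' ^ n)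
          = a w * w ^ n := by
        intro w _
        rw [ha, Finset.sum_mul]
        apply Finset.sum_congr rfl
        intro i' hi'
        rw [(Finset.mem_filter.1 hi').2]
      rw [← h1, Finset.sum_congr rfl h2]
      -- now sum over V = sum over Fin r
      rw [← Finset.sum_attach V (fun w => a w * w ^ n)]
      exact (Fintype.sum_equiv (V.orderIsoOfFin rfl).toEquiv _ _ (fun jj => rfl)).symm
    obtain ⟨ρ, Λ, hρ, hΛ, Q, hQcard, hQ⟩ := build_primes r hrge (fun jj => a (v jj)) v
      hapos hvpos hvinj (M + 1)
    have hspos : 0 < ∑ i', c i' * x i' ^ ρ := by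
      apply Finset.sum_pos (fun i'' _ => by have := hc i''; have := hx i''; positivity)
      exact ⟨i, mem_univ i⟩
    have hQsub : Q ⊆ (∑ i', c i' * x i' ^ ρ).primeFactors := by
      intro p hp
      obtain ⟨hp1, hp2, -⟩ := hQ p hp
      rw [Nat.mem_primeFactors]
      exact ⟨hp1, by rwa [hsum ρ], hspos.ne'⟩
    have := Finset.card_le_card hQsub
    have := hM ρ hρ
    omega
  · intro hall
    rcases Nat.eq_zero_or_pos k with rfl | hk
    · refine ⟨0, fun n _ => ?_⟩
      rw [Finset.univ_eq_empty, Finset.sum_empty, Nat.primeFactors_zero]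
      simp
    · set i₀ : Fin k := ⟨0, hk⟩
      set w : ℕ := x i₀ with hw
      set C : ℕ := ∑ i', c i' with hC
      have hCpos : 0 < C := Finset.sum_pos (fun i'' _ => hc i'') ⟨i₀, mem_univ i₀⟩
      have hwpos : 0 < w := hx i₀
      refine ⟨(C * w).primeFactors.card, fun n hn => ?_⟩
      have hsum : ∑ i', c i' * x i' ^ n = C * w ^ n := by
        rw [hC, Finset.sum_mul]
        apply Finset.sum_congr rfl
        intro i' _
        rw [hall i' i₀]
      rw [hsum]
      apply Finset.card_le_card
      rw [Nat.primeFactors_mul hCpos.ne' (pow_pos hwpos n).ne',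
        Nat.primeFactors_pow w (by omega),
        Nat.primeFactors_mul hCpos.ne' hwpos.ne']
end

section
/- Let x₁,…,x_k be positive integers, not all equal. Then there exists a real constant C > 1 such that ω(x₁^n + ⋯ + x_k^n) > slog_C(n) for infinitely many positive integers n. -/
/-- Tetration: `tower C 0 = 1`, `tower C (l+1) = C ^ (tower C l)` (real
exponentiation). -/
noncomputable def tower (C : ℝ) : ℕ → ℝ
  | 0 => 1
  | l + 1 => C ^ tower C l

namespace OmegaAux
open Finset



/-- Power sum. -/
def S {k : ℕ} (y : Fin k → ℕ) (n : ℕ) : ℕ := ∑ i, y i ^ n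

lemma pow_add_pow_le (x s n : ℕ) (hn : 1 ≤ n) : x ^ n + s ^ n ≤ (x + s) ^ n := by
  induction n with
  | zero => omega
  | succ n ih =>
    rcases Nat.eq_or_lt_of_le hn with h | h
    · simp [← h]
    · have hn' : 1 ≤ n := by omega
      have := ih hn'
      have h1 : x ^ (n+1) + s ^ (n+1) ≤ (x + s) * (x ^ n + s ^ n) := by
        ring_nf
        nlinarith [Nat.zero_le (x * s ^ n), Nat.zero_le (s * x ^ n)]
      calc x ^ (n+1) + s ^ (n+1) ≤ (x + s) * (x ^ n + s ^ n) := h1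
        _ ≤ (x + s) * (x + s) ^ n := Nat.mul_le_mul_left _ this
        _ = (x + s) ^ (n+1) := by ring

variable {k : ℕ} (y : Fin k → ℕ)

lemma S_le_pow (n : ℕ) (hn : 1 ≤ n) : S y n ≤ (S y 1) ^ n := by
  unfold S
  simp only [pow_one]
  induction (univ : Finset (Fin k)) using Finset.cons_induction with
  | empty => simpa using Nat.one_le_iff_ne_zero.mp hn |> fun _ => by positivity
  | cons a s ha ih =>
    rw [Finset.sum_cons, Finset.sum_cons]
    calc y a ^ n + ∑ i ∈ s, y i ^ n ≤ y a ^ n + (∑ i ∈ s, y i) ^ n := by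
          have := ih; omega
      _ ≤ (y a + ∑ i ∈ s, y i) ^ n := pow_add_pow_le _ _ _ hn





variable {k : ℕ} {y : Fin k → ℕ}

lemma S_pos (hy : ∀ i, 0 < y i) (hk : 0 < k) (n : ℕ) : 0 < S y n := by
  unfold S
  have : (univ : Finset (Fin k)).Nonempty := univ_nonempty_iff.mpr (Fin.pos_iff_nonempty.mp hk)
  exact Finset.sum_pos (fun i _ => Nat.pow_pos (hy i)) this

lemma S_strict (hy : ∀ i, 0 < y i) {i2 : Fin k} (h2 : 2 ≤ y i2) {a b : ℕ} (hab : a < b) :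
    S y a < S y b := by
  unfold S
  refine Finset.sum_lt_sum (fun i _ => Nat.pow_le_pow_right (hy i) (le_of_lt hab)) ⟨i2, mem_univ _, ?_⟩
  exact Nat.pow_lt_pow_right (by omega) hab

/-- Key congruence: if `a ≤ a'`, `p^(J-1)*(p-1) ∣ a' - a` and (in case `p` divides
some `y i`) `J ≤ a`, then `S y a' ≡ S y a [MOD p^J]`. -/
lemma S_modEq {p : ℕ} (hp : p.Prime) {J a a' : ℕ} (hJ : 1 ≤ J) (haa : a ≤ a')
    (hdvd : p ^ (J - 1) * (p - 1) ∣ a' - a)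
    (hB : ∀ i, p ∣ y i → J ≤ a) :
    S y a' ≡ S y a [MOD p ^ J] := by
  have hφ : (p ^ J).totient = p ^ (J - 1) * (p - 1) := Nat.totient_prime_pow hp (by omega)
  unfold S
  rw [← ZMod.natCast_eq_natCast_iff]
  push_cast
  refine Finset.sum_congr rfl (fun i _ => ?_)
  by_cases hpy : p ∣ y i
  · -- both sides are 0 in ZMod (p^J)
    have hJa : J ≤ a := hB i hpy
    obtain ⟨z, hz⟩ := hpy
    have h0 : ∀ m : ℕ, J ≤ m → ((y i : ZMod (p ^ J)))^m = 0 := by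
      intro m hm
      have : (p : ZMod (p ^ J))^J = 0 := by
        have : ((p ^ J : ℕ) : ZMod (p ^ J)) = 0 := ZMod.natCast_self _
        push_cast at this
        exact this
      have hyz : (y i : ZMod (p ^ J)) = (p : ZMod (p ^ J)) * z := by push_cast [hz]; ring
      calc ((y i : ZMod (p ^ J)))^m = ((p : ZMod (p^J))^J) * ((p:ZMod (p^J))^(m-J) * z^m) := by
            rw [hyz, mul_pow, ← mul_assoc, ← pow_add, show J + (m - J) = m by omega]
        _ = 0 := by rw [this, zero_mul]
    rw [h0 a hJa, h0 a' (le_trans hJa haa)]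
  · -- Euler
    obtain ⟨c, hc⟩ := hdvd
    have ha' : a' = a + (p ^ (J-1) * (p-1)) * c := by omega
    have hcop : (y i).Coprime (p ^ J) :=
      Nat.Coprime.pow_right _ (Nat.coprime_comm.mp ((hp.coprime_iff_not_dvd).mpr hpy))
    have heuler : (y i) ^ ((p ^ J).totient) ≡ 1 [MOD p ^ J] := Nat.ModEq.pow_totient hcop
    have : (y i) ^ a' ≡ (y i) ^ a [MOD p ^ J] := by
      rw [ha', pow_add, pow_mul, hφ.symm]
      calc (y i)^a * ((y i)^(p^J).totient)^c ≡ (y i)^a * 1^c [MOD p^J] :=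
            Nat.ModEq.mul_left _ (Nat.ModEq.pow c heuler)
        _ = (y i)^a := by ring
    have := (ZMod.natCast_eq_natCast_iff _ _ _).mpr this
    push_cast at this
    exact this





def applyE (e : ℤ) (u : ℕ → ℤ) : ℕ → ℤ := fun t => u (t+1) - e * u t

def elimL : List ℤ → (ℕ → ℤ) → (ℕ → ℤ)
  | [], u => u
  | e :: es, u => elimL es (applyE e u)

lemma elimL_sum {ι : Type*} (I : Finset ι) (e : ι → ℤ) :
    ∀ (l : List ℤ) (c : ι → ℤ) (t : ℕ),
      elimL l (fun t => ∑ i ∈ I, c i * e i ^ t) t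
      = ∑ i ∈ I, c i * (l.map (fun r => e i - r)).prod * e i ^ t := by
  intro l
  induction l with
  | nil => intro c t; simp [elimL]
  | cons e₀ es ih =>
    intro c t
    have happ : applyE e₀ (fun t => ∑ i ∈ I, c i * e i ^ t)
        = fun t => ∑ i ∈ I, (c i * (e i - e₀)) * e i ^ t := by
      funext t
      unfold applyE
      rw [Finset.mul_sum, ← Finset.sum_sub_distrib]
      exact Finset.sum_congr rfl fun i _ => by ring
    show elimL es (applyE e₀ fun t => ∑ i ∈ I, c i * e i ^ t) t = _
    rw [happ, ih]
    refine Finset.sum_congr rfl fun i _ => ?_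
    rw [List.map_cons, List.prod_cons]
    ring

lemma elimL_dvd (d : ℤ) :
    ∀ (l : List ℤ) (u : ℕ → ℤ) (t₀ : ℕ),
      (∀ r < l.length + 1, d ∣ u (t₀ + r)) → d ∣ elimL l u t₀ := by
  intro l
  induction l with
  | nil => intro u t₀ h; simpa [elimL] using h 0 (by omega)
  | cons e es ih =>
    intro u t₀ h
    refine ih (applyE e u) t₀ (fun r hr => ?_)
    unfold applyE
    refine dvd_sub ?_ (Dvd.dvd.mul_left ?_ e)
    · have := h (r+1) (by simp at hr ⊢; omega)
      simpa [Nat.add_assoc] using this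
    · exact h r (by simp at hr ⊢; omega)

lemma abs_list_prod_le (M : ℤ) (hM : 0 ≤ M) :
    ∀ l : List ℤ, (∀ x ∈ l, |x| ≤ M) → |l.prod| ≤ M ^ l.length := by
  intro l
  induction l with
  | nil => simp
  | cons x xs ih =>
    intro h
    rw [List.prod_cons, abs_mul, List.length_cons, pow_succ]
    have h1 : |x| ≤ M := h x (List.mem_cons_self)
    have h2 : |xs.prod| ≤ M ^ xs.length := ih (fun z hz => h z (List.mem_cons_of_mem _ hz))
    calc |x| * |xs.prod| ≤ M * M ^ xs.length := by
          exact mul_le_mul h1 h2 (abs_nonneg _) hM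
      _ = M ^ xs.length * M := by ring

variable {k : ℕ} {y : Fin k → ℕ}

lemma exists_not_dvd_window (hy : ∀ i, 0 < y i) (hg : Finset.univ.gcd y = 1)
    {p : ℕ} (hp : p.Prime) (a q : ℕ) (ha : 1 ≤ a) (hq : 1 ≤ q) :
    ∃ t < k, ¬ (p ^ ((2 * (S y 1) ^ q + k) * (k + 1) + 1) ∣ S y (a + t * q)) := by
  -- pick i₀ with p ∤ y i₀
  have hi₀ : ∃ i₀, ¬ p ∣ y i₀ := by
    by_contra h
    push_neg at h
    have hd : p ∣ Finset.univ.gcd y := Finset.dvd_gcd (fun i _ => h i)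
    rw [hg] at hd
    have := Nat.le_of_dvd one_pos hd
    have := hp.two_le
    omega
  obtain ⟨i₀, hi₀⟩ := hi₀
  set E := S y 1 with hE
  set B := 2 * E ^ q + k with hB
  set K := B * (k + 1) with hK
  by_contra hcon
  push_neg at hcon
  -- definitions
  set eZ : Fin k → ℤ := fun i => ((y i : ℤ)) ^ q with heZ
  set c : Fin k → ℤ := fun i => ((y i : ℤ)) ^ a with hc
  set u : ℕ → ℤ := fun t => ((S y (a + t * q) : ℕ) : ℤ) with huDef
  have hu : u = fun t => ∑ i, c i * eZ i ^ t := by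
    funext t
    simp only [huDef, hc, heZ, S]
    push_cast
    refine Finset.sum_congr rfl fun i _ => ?_
    rw [pow_add, mul_comm t q, pow_mul]
  set R : Finset ℤ := (Finset.univ.image eZ).erase (eZ i₀) with hR
  set l : List ℤ := R.toList with hl
  have hlen : l.length = R.card := Finset.length_toList R
  have hmemim : eZ i₀ ∈ Finset.univ.image eZ := Finset.mem_image_of_mem eZ (Finset.mem_univ i₀)
  have him_pos : 1 ≤ (Finset.univ.image eZ).card := Finset.card_pos.mpr ⟨_, hmemim⟩
  have hRcard : R.card + 1 ≤ k := by
    rw [hR, Finset.card_erase_of_mem hmemim]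
    have h1 : (Finset.univ.image eZ).card ≤ k := by
      calc (Finset.univ.image eZ).card ≤ (Finset.univ : Finset (Fin k)).card :=
            Finset.card_image_le
        _ = k := by simp
    omega
  -- all window points divisible
  have hdvd_u : ∀ r < l.length + 1, ((p : ℤ) ^ (K + 1)) ∣ u (0 + r) := by
    intro r hr
    have hrk : r < k := by omega
    have := hcon r hrk
    rw [huDef]
    simp only [Nat.zero_add]
    exact_mod_cast Int.natCast_dvd_natCast.mpr this
  have key : ((p : ℤ) ^ (K + 1)) ∣ elimL l u 0 := elimL_dvd _ l u 0 hdvd_u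
  rw [hu, elimL_sum] at key
  simp only [pow_zero, mul_one] at key
  -- split the sum
  set Δ : ℤ := (l.map (fun r => eZ i₀ - r)).prod with hΔ
  set F1 : Finset (Fin k) := Finset.univ.filter (fun i => y i = y i₀) with hF1
  have hysub : ∀ i : Fin k, y i ≠ y i₀ → eZ i ∈ l := by
    intro i hne
    have hne2 : eZ i ≠ eZ i₀ := by
      intro h
      apply hne
      have : (y i : ℤ) ^ q = (y i₀ : ℤ) ^ q := h
      have : y i ^ q = y i₀ ^ q := by exact_mod_cast this
      exact Nat.pow_left_injective (by omega) this
    rw [hl, Finset.mem_toList, hR]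
    exact Finset.mem_erase.mpr ⟨hne2, Finset.mem_image_of_mem eZ (Finset.mem_univ i)⟩
  have hsplit : (∑ i, c i * (l.map (fun r => eZ i - r)).prod)
      = (F1.card : ℤ) * (y i₀ : ℤ) ^ a * Δ := by
    rw [← Finset.sum_filter_add_sum_filter_not Finset.univ (fun i => y i = y i₀)]
    have h2 : ∑ i ∈ Finset.univ.filter (fun i => ¬ y i = y i₀),
        c i * (l.map (fun r => eZ i - r)).prod = 0 := by
      refine Finset.sum_eq_zero fun i hi => ?_
      have hne : y i ≠ y i₀ := by
        simp only [Finset.mem_filter] at hi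
        exact hi.2
      have : (0 : ℤ) ∈ l.map (fun r => eZ i - r) :=
        List.mem_map.mpr ⟨eZ i, hysub i hne, sub_self _⟩
      rw [List.prod_eq_zero this, mul_zero]
    have h1 : ∑ i ∈ F1, c i * (l.map (fun r => eZ i - r)).prod
        = (F1.card : ℤ) * (y i₀ : ℤ) ^ a * Δ := by
      have : ∀ i ∈ F1, c i * (l.map (fun r => eZ i - r)).prod = (y i₀ : ℤ) ^ a * Δ := by
        intro i hi
        have hyi : y i = y i₀ := by
          simp only [hF1, Finset.mem_filter] at hi
          exact hi.2
        have heq : eZ i = eZ i₀ := by simp only [heZ, hyi]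
        rw [hc]
        simp only [hyi, heq, hΔ]
      rw [Finset.sum_congr rfl this, Finset.sum_const, nsmul_eq_mul]
      ring
    rw [h1, h2, add_zero]
  rw [hsplit] at key
  -- remove the coprime factor
  have hcop : IsCoprime ((p : ℤ) ^ (K + 1)) ((y i₀ : ℤ) ^ a) := by
    apply IsCoprime.pow
    rw [Int.isCoprime_iff_gcd_eq_one]
    exact_mod_cast (hp.coprime_iff_not_dvd.mpr hi₀)
  have key2 : ((p : ℤ) ^ (K + 1)) ∣ ((F1.card : ℤ) * Δ) * ((y i₀ : ℤ) ^ a) := by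
    have : ((F1.card : ℤ) * Δ) * ((y i₀ : ℤ) ^ a) = (F1.card : ℤ) * (y i₀ : ℤ) ^ a * Δ := by ring
    rw [this]
    exact key
  have key3 : ((p : ℤ) ^ (K + 1)) ∣ (F1.card : ℤ) * Δ := hcop.dvd_of_dvd_mul_right key2
  -- nonzero
  have hΔne : Δ ≠ 0 := by
    rw [hΔ]
    apply List.prod_ne_zero
    intro h0
    obtain ⟨r, hrl, hr0⟩ := List.mem_map.mp h0
    have : r = eZ i₀ := by omega
    rw [hl, Finset.mem_toList, hR] at hrl
    exact (Finset.mem_erase.mp hrl).1 this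
  have hcnt : 1 ≤ F1.card := Finset.card_pos.mpr ⟨i₀, by simp [hF1]⟩
  have hXne : (F1.card : ℤ) * Δ ≠ 0 :=
    mul_ne_zero (by exact_mod_cast Nat.one_le_iff_ne_zero.mp hcnt) hΔne
  -- size bounds
  have hyE : ∀ j, y j ≤ E := by
    intro j
    rw [hE]
    calc y j = y j ^ 1 := (pow_one _).symm
      _ ≤ ∑ i, y i ^ 1 := Finset.single_le_sum (f := fun i => y i ^ 1) (fun i _ => Nat.zero_le _) (Finset.mem_univ j)
  have habsE : ∀ j : Fin k, |eZ j| ≤ (E:ℤ)^q := by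
    intro j
    have h1 : |eZ j| = (y j : ℤ) ^ q := by
      rw [heZ]
      simp [abs_of_nonneg, pow_nonneg]
    rw [h1]
    apply pow_le_pow_left₀ (by positivity)
    exact_mod_cast hyE j
  have habs : ∀ x ∈ l.map (fun r => eZ i₀ - r), |x| ≤ (2 * (E:ℤ) ^ q) := by
    intro x hx
    obtain ⟨r, hrl, hrx⟩ := List.mem_map.mp hx
    rw [hl, Finset.mem_toList, hR] at hrl
    obtain ⟨j, _, hj⟩ := Finset.mem_image.mp (Finset.mem_erase.mp hrl).2
    have h2 : |r| ≤ (E:ℤ)^q := by rw [← hj]; exact habsE j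
    have h3 : |eZ i₀ - r| ≤ |eZ i₀| + |r| := abs_sub _ _
    have h4 := habsE i₀
    rw [← hrx]
    linarith
  have hE1 : 1 ≤ E := le_trans (hy i₀) (hyE i₀)
  have hle : ((p:ℤ))^(K+1) ≤ |(F1.card:ℤ) * Δ| :=
    Int.le_of_dvd (abs_pos.mpr hXne) ((dvd_abs _ _).mpr key3)
  have habsX : |(F1.card:ℤ) * Δ| ≤ (k:ℤ) * (2*(E:ℤ)^q)^k := by
    rw [abs_mul]
    have h1 : |(F1.card:ℤ)| ≤ (k:ℤ) := by
      rw [abs_of_nonneg (by positivity)]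
      have := Finset.card_le_univ F1
      simp only [Finset.card_univ, Fintype.card_fin] at this
      exact_mod_cast this
    have h2 : |Δ| ≤ (2*(E:ℤ)^q)^l.length := by
      have := abs_list_prod_le (2*(E:ℤ)^q) (by positivity) (l.map (fun r => eZ i₀ - r)) habs
      rwa [List.length_map] at this
    have h3 : (2*(E:ℤ)^q)^l.length ≤ (2*(E:ℤ)^q)^k := by
      apply pow_le_pow_right₀
      · have : (1:ℤ) ≤ (E:ℤ)^q := one_le_pow₀ (by exact_mod_cast hE1)
        linarith
      · omega
    exact mul_le_mul h1 (le_trans h2 h3) (abs_nonneg _) (by positivity)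
  have hnat : p^(K+1) ≤ k * (2*E^q)^k := by
    have : ((p^(K+1) : ℕ) : ℤ) ≤ ((k * (2*E^q)^k : ℕ) : ℤ) := by
      push_cast
      calc ((p:ℤ))^(K+1) ≤ |(F1.card:ℤ) * Δ| := hle
        _ ≤ (k:ℤ) * (2*(E:ℤ)^q)^k := habsX
    exact_mod_cast this
  have c1 : k * (2*E^q)^k ≤ B^(k+1) := by
    calc k * (2*E^q)^k ≤ B * B^k :=
          Nat.mul_le_mul (by omega) (Nat.pow_le_pow_left (by omega) k)
      _ = B^(k+1) := by rw [← pow_succ']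
  have c2 : B^(k+1) ≤ 2^K := by
    calc B^(k+1) ≤ (2^B)^(k+1) := Nat.pow_le_pow_left (Nat.lt_two_pow_self (n := B)).le _
      _ = 2^K := by rw [← pow_mul, hK]
  have c3 : 2^(K+1) ≤ p^(K+1) := Nat.pow_le_pow_left hp.two_le _
  have c4 : 2^K < 2^(K+1) := Nat.pow_lt_pow_right one_lt_two (by omega)
  omega


/-- Small-prime control data: a fixed exact `p`-valuation `m` along the
whole progression `a + t*q`. -/
def SCdata (y : Fin k → ℕ) (p a q : ℕ) : Prop :=
  ∃ m, m + 1 ≤ a ∧ p ^ m * (p - 1) ∣ q ∧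
    ∀ t, p ^ m ∣ S y (a + t * q) ∧ ¬ p ^ (m+1) ∣ S y (a + t * q)

lemma SCdata_mono {p a q a' q' : ℕ} (h : SCdata y p a q) (hq : q ∣ q')
    (hc : ∃ c, a' = a + c * q) : SCdata y p a' q' := by
  obtain ⟨m, hm1, hm2, hm3⟩ := h
  obtain ⟨c, rfl⟩ := hc
  obtain ⟨d, rfl⟩ := hq
  refine ⟨m, by omega, Dvd.dvd.mul_right hm2 d, fun t => ?_⟩
  have : a + c * q + t * (q * d) = a + (c + t * d) * q := by ring
  rw [this]
  exact hm3 (c + t * d)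

lemma exact_val_propagate {p : ℕ} (hp : p.Prime) {m a q : ℕ}
    (hma : m + 1 ≤ a) (hdq : p ^ m * (p - 1) ∣ q)
    (h1 : p ^ m ∣ S y a) (h2 : ¬ p ^ (m+1) ∣ S y a) :
    ∀ t, p ^ m ∣ S y (a + t * q) ∧ ¬ p ^ (m+1) ∣ S y (a + t * q) := by
  intro t
  have hcong : S y (a + t * q) ≡ S y a [MOD p ^ (m+1)] := by
    refine S_modEq hp (by omega) (by omega) ?_ (fun i _ => hma)
    have h6 : a + t * q - a = t * q := by omega
    rw [h6, show m + 1 - 1 = m from rfl]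
    exact Dvd.dvd.mul_left hdq t
  constructor
  · have hcong' : S y (a + t * q) ≡ S y a [MOD p ^ m] :=
      Nat.ModEq.of_dvd (pow_dvd_pow p (Nat.le_succ m)) hcong
    exact Nat.modEq_zero_iff_dvd.mp
      (hcong'.trans (Nat.modEq_zero_iff_dvd.mpr h1))
  · intro hdvd
    exact h2 (Nat.modEq_zero_iff_dvd.mp
      (hcong.symm.trans (Nat.modEq_zero_iff_dvd.mpr hdvd)))

lemma SC_step (hy : ∀ i, 0 < y i) (hg : Finset.univ.gcd y = 1) (hk : 0 < k)
    {p : ℕ} (hp : p.Prime) {a q : ℕ} (ha : 1 ≤ a) (hq : 1 ≤ q) :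
    ∃ a' q', 1 ≤ a' ∧ 1 ≤ q' ∧ a ≤ a' ∧ (∃ c, a' = a + c * q) ∧ q ∣ q' ∧
      SCdata y p a' q' := by
  set K := (2 * (S y 1) ^ q + k) * (k + 1) with hK
  set a₁ := a + (K+1) * q with ha₁
  obtain ⟨t₁, ht₁k, hnd⟩ := exists_not_dvd_window hy hg hp a₁ q (by omega) hq
  set n₁ := a₁ + t₁ * q with hn₁
  have hS0 : S y n₁ ≠ 0 := (S_pos hy hk n₁).ne'
  set m := (S y n₁).factorization p with hm
  have hm1 : p ^ m ∣ S y n₁ := Nat.ordProj_dvd _ _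
  have hm2 : ¬ p ^ (m+1) ∣ S y n₁ := by
    intro hdvd
    have := (hp.pow_dvd_iff_le_factorization hS0).mp hdvd
    omega
  have hmK : m ≤ K := by
    by_contra hcon
    exact hnd (dvd_trans (pow_dvd_pow p (by omega)) hm1)
  have hma : m + 1 ≤ n₁ := by
    have h5 : (K+1) * 1 ≤ (K+1) * q := Nat.mul_le_mul_left _ hq
    omega
  refine ⟨n₁, q * (p ^ m * (p - 1)), by omega, ?_, by omega,
    ⟨K + 1 + t₁, by rw [hn₁, ha₁]; ring⟩, dvd_mul_right _ _, ?_⟩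
  · have hpm : 0 < p ^ m := Nat.pow_pos hp.pos
    have hp1 : 0 < p - 1 := by have := hp.two_le; omega
    exact Nat.mul_pos hq (Nat.mul_pos hpm hp1)
  · exact ⟨m, hma, Dvd.dvd.mul_left (dvd_refl _) q, exact_val_propagate hp hma
      (Dvd.dvd.mul_left (dvd_refl _) q) hm1 hm2⟩

lemma base_exists (hy : ∀ i, 0 < y i) (hg : Finset.univ.gcd y = 1) (hk : 0 < k) :
    ∃ a q, 1 ≤ a ∧ 1 ≤ q ∧ ∀ p, p.Prime → (∃ i, p ∣ y i) → SCdata y p a q := by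
  have main : ∀ G : Finset ℕ, (∀ p ∈ G, p.Prime) →
      ∃ a q, 1 ≤ a ∧ 1 ≤ q ∧ ∀ p ∈ G, SCdata y p a q := by
    intro G
    induction G using Finset.induction_on with
    | empty => exact fun _ => ⟨1, 1, le_refl _, le_refl _, fun p hp => absurd hp (Finset.notMem_empty p)⟩
    | @insert p G hpG ih =>
      intro hprime
      obtain ⟨a, q, ha, hq, hall⟩ := ih (fun r hr => hprime r (Finset.mem_insert_of_mem hr))
      obtain ⟨a', q', ha', hq', haa', hc, hqq', hSC⟩ :=
        SC_step hy hg hk (hprime p (Finset.mem_insert_self p G)) ha hq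
      refine ⟨a', q', ha', hq', fun r hr => ?_⟩
      rcases Finset.mem_insert.mp hr with rfl | hrG
      · exact hSC
      · exact SCdata_mono (hall r hrG) hqq' hc
  obtain ⟨a, q, ha, hq, hall⟩ := main ((∏ i, y i).primeFactors)
    (fun p hp => (Nat.mem_primeFactors.mp hp).1)
  refine ⟨a, q, ha, hq, fun p hp ⟨i, hi⟩ => ?_⟩
  refine hall p (Nat.mem_primeFactors.mpr ⟨hp, dvd_trans hi (Finset.dvd_prod_of_mem y (Finset.mem_univ i)), ?_⟩)
  exact (Finset.prod_pos (fun i _ => hy i)).ne'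


lemma prod_pow_factorization_dvd (N : ℕ) (hN : N ≠ 0) (F : Finset ℕ) :
    (∏ p ∈ F, p ^ N.factorization p) ∣ N := by
  have h1 : (∏ p ∈ F, p ^ N.factorization p)
      = ∏ p ∈ F ∩ N.factorization.support, p ^ N.factorization p := by
    refine (Finset.prod_subset Finset.inter_subset_left (fun p hpF hpn => ?_)).symm
    have : p ∉ N.factorization.support := fun hs => hpn (Finset.mem_inter.mpr ⟨hpF, hs⟩)
    rw [Finsupp.notMem_support_iff.mp this, pow_zero]
  have h2 : ∏ p ∈ N.factorization.support, p ^ N.factorization p = N := by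
    conv_rhs => rw [← Nat.factorization_prod_pow_eq_self hN]
    rw [Finsupp.prod]
  rw [h1]
  refine dvd_trans ?_ (dvd_of_eq h2)
  exact Finset.prod_dvd_prod_of_subset (F ∩ N.factorization.support)
    N.factorization.support (fun p => p ^ N.factorization p) Finset.inter_subset_right

lemma eq_prod_pow_factorization (N : ℕ) (hN : N ≠ 0) (F : Finset ℕ)
    (hsub : N.primeFactors ⊆ F) :
    N = ∏ p ∈ F, p ^ N.factorization p := by
  have h2 : ∏ p ∈ N.factorization.support, p ^ N.factorization p = N := by
    conv_rhs => rw [← Nat.factorization_prod_pow_eq_self hN]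
    rw [Finsupp.prod]
  calc N = ∏ p ∈ N.factorization.support, p ^ N.factorization p := h2.symm
    _ = ∏ p ∈ F, p ^ N.factorization p := by
        refine Finset.prod_subset ?_ (fun p hpF hpn => ?_)
        · rwa [Nat.support_factorization]
        · rw [Finsupp.notMem_support_iff.mp hpn, pow_zero]

lemma exact_transfer {p m X Y : ℕ} (hcong : X ≡ Y [MOD p ^ (m+1)])
    (h1 : p ^ m ∣ Y) (h2 : ¬ p ^ (m+1) ∣ Y) :
    p ^ m ∣ X ∧ ¬ p ^ (m+1) ∣ X := by
  constructor
  · have hcong' : X ≡ Y [MOD p ^ m] :=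
      Nat.ModEq.of_dvd (pow_dvd_pow p (Nat.le_succ m)) hcong
    exact Nat.modEq_zero_iff_dvd.mp (hcong'.trans (Nat.modEq_zero_iff_dvd.mpr h1))
  · intro hdvd
    exact h2 (Nat.modEq_zero_iff_dvd.mp
      (hcong.symm.trans (Nat.modEq_zero_iff_dvd.mpr hdvd)))


/-- The main invariant. -/
def Good (y : Fin k → ℕ) (a q : ℕ) (F : Finset ℕ) : Prop :=
  1 ≤ a ∧ 1 ≤ q ∧ (∀ p ∈ F, Nat.Prime p) ∧
  (∀ p ∈ F, ∀ t, p ∣ S y (a + t * q)) ∧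
  (∀ p, Nat.Prime p → (∃ i, p ∣ y i) → SCdata y p a q)

lemma new_prime_keeps (hy : ∀ i, 0 < y i) {a q p' : ℕ} (hp' : Nat.Prime p')
    (ha : 1 ≤ a) (hd : p' ∣ S y a) :
    ∀ t, p' ∣ S y (a + t * (q * (p' - 1))) := by
  intro t
  have hcong : S y (a + t * (q * (p' - 1))) ≡ S y a [MOD p' ^ 1] := by
    refine S_modEq hp' (le_refl 1) (by omega) ?_ (fun i _ => ha)
    have h6 : a + t * (q * (p' - 1)) - a = t * (q * (p' - 1)) := by omega
    rw [h6, pow_zero, one_mul]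
    exact Dvd.dvd.mul_left (dvd_mul_left _ _) t
  rw [pow_one] at hcong
  exact Nat.modEq_zero_iff_dvd.mp (hcong.trans (Nat.modEq_zero_iff_dvd.mpr hd))

lemma main_step (hy : ∀ i, 0 < y i) (hg : Finset.univ.gcd y = 1) (hk : 0 < k)
    {i2 : Fin k} (h2 : 2 ≤ y i2) {a q : ℕ} {F : Finset ℕ} (hG : Good y a q F) :
    ∃ a' q' p', Nat.Prime p' ∧ p' ∉ F ∧ Good y a' q' (insert p' F) ∧
      a ≤ a' ∧ p' ∣ S y a' ∧ q' = q * (p' - 1) ∧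
      a' ≤ a + q * S y a * (∏ p ∈ F, p) := by
  obtain ⟨ha, hq, hFp, hFd, hSC⟩ := hG
  have hS0 : ∀ n, S y n ≠ 0 := fun n => (S_pos hy hk n).ne'
  set f : ℕ → ℕ := fun p => (S y a).factorization p with hf
  by_cases hnew : ∃ p', Nat.Prime p' ∧ p' ∉ F ∧ p' ∣ S y a
  · -- Case A : a fresh prime already divides S y a
    obtain ⟨p', hp', hp'F, hp'd⟩ := hnew
    have hq' : 1 ≤ q * (p' - 1) := by
      have := hp'.two_le
      have : 1 ≤ p' - 1 := by omega
      exact Nat.mul_pos hq this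
    refine ⟨a, q * (p' - 1), p', hp', hp'F,
      ⟨ha, hq', ?_, ?_, ?_⟩, le_refl a, hp'd, rfl, Nat.le_add_right _ _⟩
    · intro p hp
      rcases Finset.mem_insert.mp hp with rfl | hpF
      · exact hp'
      · exact hFp p hpF
    · intro p hp t
      rcases Finset.mem_insert.mp hp with rfl | hpF
      · exact new_prime_keeps hy hp' ha hp'd t
      · have : a + t * (q * (p' - 1)) = a + (t * (p' - 1)) * q := by ring
        rw [this]
        exact hFd p hpF _
    · exact fun p hp hex => SCdata_mono (hSC p hp hex) (dvd_mul_right q _) ⟨0, by ring⟩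
  · -- Case B : S y a is F-smooth; jump ahead
    push_neg at hnew
    have hsub : (S y a).primeFactors ⊆ F := by
      intro r hr
      obtain ⟨hrp, hrd, -⟩ := Nat.mem_primeFactors.mp hr
      by_contra hrF
      exact (hnew r hrp hrF) hrd
    set Pr : ℕ := ∏ p ∈ F, (p ^ f p * (p - 1)) with hPr
    set T : ℕ := q * Pr with hT
    have hPr1 : 1 ≤ Pr := by
      rw [hPr, Nat.one_le_iff_ne_zero]
      apply Nat.pos_iff_ne_zero.mp
      apply Finset.prod_pos
      intro p hpF
      have h2p := (hFp p hpF).two_le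
      have hpm : 0 < p ^ f p := Nat.pow_pos (show 0 < p by omega)
      exact Nat.mul_pos hpm (by omega)
    have hT1 : 1 ≤ T := Nat.mul_pos hq hPr1
    -- congruence at a + T for each p ∈ F
    have hmod : ∀ p ∈ F, S y (a + T) ≡ S y a [MOD p ^ (f p + 1)] := by
      intro p hpF
      refine S_modEq (hFp p hpF) (by omega) (by omega) ?_ ?_
      · have h6 : a + T - a = T := by omega
        rw [h6, show f p + 1 - 1 = f p from rfl]
        refine Dvd.dvd.mul_left ?_ q
        exact Finset.dvd_prod_of_mem _ hpF
      · intro i hpyi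
        obtain ⟨m₀, hm₀a, hm₀q, hm₀v⟩ := hSC p (hFp p hpF) ⟨i, hpyi⟩
        have hv := hm₀v 0
        rw [Nat.zero_mul, Nat.add_zero] at hv
        have hle : m₀ ≤ f p :=
          ((hFp p hpF).pow_dvd_iff_le_factorization (hS0 a)).mp hv.1
        have hlt : ¬ (m₀ + 1 ≤ f p) := fun hcon =>
          hv.2 (((hFp p hpF).pow_dvd_iff_le_factorization (hS0 a)).mpr hcon)
        have hff : f p = (S y a).factorization p := rfl
        omega
    have hvals : ∀ p ∈ F, p ^ f p ∣ S y (a + T) ∧ ¬ p ^ (f p + 1) ∣ S y (a + T) := by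
      intro p hpF
      refine exact_transfer (hmod p hpF) ?_ ?_
      · exact ((hFp p hpF).pow_dvd_iff_le_factorization (hS0 a)).mpr (le_refl _)
      · intro hdvd
        have := ((hFp p hpF).pow_dvd_iff_le_factorization (hS0 a)).mp hdvd
        have hff : f p = (S y a).factorization p := rfl
        omega
    have hfact' : ∀ p ∈ F, (S y (a + T)).factorization p = f p := by
      intro p hpF
      obtain ⟨hv1, hv2⟩ := hvals p hpF
      have h1 : f p ≤ (S y (a + T)).factorization p :=
        ((hFp p hpF).pow_dvd_iff_le_factorization (hS0 _)).mp hv1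
      have h2' : ¬ (f p + 1 ≤ (S y (a + T)).factorization p) := fun hcon =>
        hv2 (((hFp p hpF).pow_dvd_iff_le_factorization (hS0 _)).mpr hcon)
      omega
    have hnew' : ∃ p', Nat.Prime p' ∧ p' ∉ F ∧ p' ∣ S y (a + T) := by
      by_contra hno
      push_neg at hno
      have hsub' : (S y (a + T)).primeFactors ⊆ F := by
        intro r hr
        obtain ⟨hrp, hrd, -⟩ := Nat.mem_primeFactors.mp hr
        by_contra hrF
        exact (hno r hrp hrF) hrd
      have he1 : S y (a + T) = ∏ p ∈ F, p ^ (S y (a + T)).factorization p :=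
        eq_prod_pow_factorization _ (hS0 _) F hsub'
      have he2 : S y a = ∏ p ∈ F, p ^ f p :=
        eq_prod_pow_factorization _ (hS0 _) F hsub
      have he3 : S y (a + T) = S y a := by
        rw [he1, he2]
        exact Finset.prod_congr rfl (fun p hpF => by rw [hfact' p hpF])
      have := S_strict hy h2 (show a < a + T by omega)
      omega
    obtain ⟨p', hp', hp'F, hp'd⟩ := hnew'
    have hq' : 1 ≤ q * (p' - 1) := by
      have := hp'.two_le
      exact Nat.mul_pos hq (by omega)
    refine ⟨a + T, q * (p' - 1), p', hp', hp'F,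
      ⟨by omega, hq', ?_, ?_, ?_⟩, by omega, hp'd, rfl, ?_⟩
    · intro p hp
      rcases Finset.mem_insert.mp hp with rfl | hpF
      · exact hp'
      · exact hFp p hpF
    · intro p hp t
      rcases Finset.mem_insert.mp hp with rfl | hpF
      · exact new_prime_keeps hy hp' (by omega) hp'd t
      · have : a + T + t * (q * (p' - 1)) = a + (Pr + t * (p' - 1)) * q := by
          rw [hT]; ring
        rw [this]
        exact hFd p hpF _
    · refine fun p hp hex => SCdata_mono (hSC p hp hex) (dvd_mul_right q _) ⟨Pr, by rw [hT]; ring⟩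
    · -- size bound
      have hprodf : (∏ p ∈ F, p ^ f p) ∣ S y a := prod_pow_factorization_dvd _ (hS0 a) F
      have hprodf' : (∏ p ∈ F, p ^ f p) ≤ S y a :=
        Nat.le_of_dvd (S_pos hy hk a) hprodf
      have hsplit : Pr = (∏ p ∈ F, p ^ f p) * (∏ p ∈ F, (p - 1)) := by
        rw [hPr, Finset.prod_mul_distrib]
      have hple : (∏ p ∈ F, (p - 1)) ≤ ∏ p ∈ F, p :=
        Finset.prod_le_prod' (fun p _ => Nat.sub_le p 1)
      have : T ≤ q * S y a * (∏ p ∈ F, p) := by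
        rw [hT, hsplit]
        calc q * ((∏ p ∈ F, p ^ f p) * (∏ p ∈ F, (p - 1)))
            ≤ q * (S y a * (∏ p ∈ F, p)) :=
              Nat.mul_le_mul_left q (Nat.mul_le_mul hprodf' hple)
          _ = q * S y a * (∏ p ∈ F, p) := by ring
      omega


/-- Natural-number tower. -/
def twN (C : ℕ) : ℕ → ℕ
  | 0 => 1
  | l + 1 => C ^ twN C l

lemma tower_cast (C : ℕ) : ∀ l, tower (C : ℝ) l = ((twN C l : ℕ) : ℝ) := by
  intro l
  induction l with
  | zero => simp [tower, twN]
  | succ l ih =>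
    rw [tower, twN, ih, Real.rpow_natCast]
    push_cast
    ring

lemma twN_strictMono {C : ℕ} (hC : 2 ≤ C) : StrictMono (twN C) := by
  apply strictMono_nat_of_lt_succ
  intro l
  calc twN C l < 2 ^ twN C l := Nat.lt_two_pow_self
    _ ≤ C ^ twN C l := Nat.pow_le_pow_left hC _
    _ = twN C (l+1) := rfl

lemma twN_pos {C : ℕ} (hC : 1 ≤ C) (l : ℕ) : 1 ≤ twN C l := by
  induction l with
  | zero => exact le_refl 1
  | succ l ih => exact Nat.one_le_pow _ _ (by omega)


lemma phi_step (hy : ∀ i, 0 < y i) (hk : 0 < k) (hE2 : 2 ≤ S y 1)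
    {a q a' q' p' : ℕ} {F : Finset ℕ}
    (ha1 : 1 ≤ a) (hq1 : 1 ≤ q) (hP1 : 1 ≤ ∏ p ∈ F, p) (hp'F : p' ∉ F)
    (haa' : a ≤ a') (ha'b : a' ≤ a + q * S y a * ∏ p ∈ F, p)
    (hq'e : q' = q * (p' - 1)) (hp'S : p' ∣ S y a') :
    q' * (∏ p ∈ insert p' F, p) * (S y 1) ^ (a' + 1)
      ≤ (S y 1) ^ (9 * (q * (∏ p ∈ F, p) * (S y 1) ^ (a + 1))) := by
  set E := S y 1 with hE
  set P := ∏ p ∈ F, p with hP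
  set Φ := q * P * E ^ (a + 1) with hΦ
  have hE1 : 1 < E := hE2
  have hSa : S y a ≤ E ^ a := S_le_pow y a ha1
  have hSa' : S y a' ≤ E ^ a' := S_le_pow y a' (by omega)
  have hp'le : p' ≤ E ^ a' := le_trans (Nat.le_of_dvd (S_pos hy hk a') hp'S) hSa'
  have hEa1 : a + 1 ≤ E ^ (a + 1) := (Nat.lt_pow_self hE1).le
  have hqP : q * P ≤ Φ := by
    have : 1 ≤ E ^ (a+1) := Nat.one_le_pow _ _ (by omega)
    calc q * P = q * P * 1 := by ring
      _ ≤ q * P * E ^ (a+1) := Nat.mul_le_mul_left _ this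
  have hΦ1 : 1 ≤ Φ := le_trans (by nlinarith) hqP
  have haΦ : a' ≤ a + Φ := by
    have h1 : q * S y a * P ≤ q * E ^ (a+1) * P := by
      have : S y a ≤ E ^ (a+1) := le_trans hSa (Nat.pow_le_pow_right (by omega) (by omega))
      exact Nat.mul_le_mul_right _ (Nat.mul_le_mul_left _ this)
    have h2 : q * E ^ (a+1) * P = Φ := by rw [hΦ]; ring
    omega
  have hprodins : ∏ p ∈ insert p' F, p = p' * P := by rw [Finset.prod_insert hp'F]
  have hstep1 : q' * (∏ p ∈ insert p' F, p) * E ^ (a' + 1)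
      ≤ q * P * (E ^ a' * E ^ a') * E ^ (a' + 1) := by
    rw [hq'e, hprodins]
    have h3 : p' - 1 ≤ E ^ a' := by omega
    calc q * (p' - 1) * (p' * P) * E ^ (a'+1)
        = q * P * ((p' - 1) * p') * E ^ (a'+1) := by ring
      _ ≤ q * P * (E ^ a' * E ^ a') * E ^ (a'+1) :=
          Nat.mul_le_mul_right _ (Nat.mul_le_mul_left _ (Nat.mul_le_mul h3 hp'le))
  have hstep2 : q * P * (E ^ a' * E ^ a') * E ^ (a' + 1) = q * P * E ^ (3 * a' + 1) := by
    rw [show 3 * a' + 1 = a' + a' + (a' + 1) by ring, pow_add, pow_add]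
    ring
  have hexp : Φ + (3 * a' + 1) ≤ 9 * Φ := by
    have h4 : 3 * a' ≤ 3 * a + 3 * Φ := by omega
    have h5 : 3 * a + 3 ≤ 3 * E ^ (a+1) := by omega
    have h6 : E ^ (a + 1) ≤ Φ := by
      calc E ^ (a+1) = 1 * 1 * E ^ (a+1) := by ring
        _ ≤ q * P * E ^ (a+1) := by
            exact Nat.mul_le_mul_right _ (Nat.mul_le_mul hq1 hP1)
    omega
  have hΦE : Φ ≤ E ^ Φ := (Nat.lt_pow_self hE1).le
  calc q' * (∏ p ∈ insert p' F, p) * E ^ (a' + 1)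
      ≤ q * P * E ^ (3 * a' + 1) := by rw [← hstep2]; exact hstep1
    _ ≤ Φ * E ^ (3 * a' + 1) := Nat.mul_le_mul_right _ hqP
    _ ≤ E ^ Φ * E ^ (3 * a' + 1) := Nat.mul_le_mul_right _ hΦE
    _ = E ^ (Φ + (3 * a' + 1)) := (pow_add E Φ (3 * a' + 1)).symm
    _ ≤ E ^ (9 * Φ) := Nat.pow_le_pow_right (by omega) hexp

end OmegaAux

open Finset OmegaAux

/-- If `x₁,…,x_k` are positive integers, not all equal, then
there is `C > 1` with `ω(x₁^n + ⋯ + x_k^n) > slog_C(n)` for infinitely many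
`n`; i.e. every `l` with `C↑↑l ≤ n` satisfies `l < ω(x₁^n + ⋯ + x_k^n)`. -/
theorem omega_sum_pow_gt_slog (k : ℕ) (x : Fin k → ℕ)
    (hx : ∀ i, 0 < x i) (hne : ¬∀ i j, x i = x j) :
    ∃ C : ℝ, 1 < C ∧ ∀ N : ℕ, ∃ n : ℕ, N ≤ n ∧ 1 ≤ n ∧
      ∀ l : ℕ, tower C l ≤ (n : ℝ) →
        l < (∑ i, x i ^ n).primeFactors.card := by
  push_neg at hne
  obtain ⟨i1, j1, hne2⟩ := hne
  have hk : 0 < k := Fin.pos i1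
  set g := Finset.univ.gcd x with hg
  have hgd : ∀ i, g ∣ x i := fun i => Finset.gcd_dvd (Finset.mem_univ i)
  have hgpos : 0 < g := by
    rcases Nat.eq_zero_or_pos g with h0 | h
    · have := Finset.gcd_eq_zero_iff.mp h0 i1 (Finset.mem_univ i1)
      have := hx i1
      omega
    · exact h
  set y : Fin k → ℕ := fun i => x i / g with hy'
  have hxy : ∀ i, x i = g * y i := fun i => (Nat.mul_div_cancel' (hgd i)).symm
  have hy : ∀ i, 0 < y i := by
    intro i
    have := hx i
    rcases Nat.eq_zero_or_pos (y i) with h0 | h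
    · rw [hxy i, h0, Nat.mul_zero] at this; omega
    · exact h
  have hgy : Finset.univ.gcd y = 1 := by
    have hdd : g * Finset.univ.gcd y ∣ g * 1 := by
      rw [Nat.mul_one]
      have h1 : g * Finset.univ.gcd y ∣ Finset.univ.gcd x :=
        Finset.dvd_gcd (fun i _ => by
          rw [hxy i]
          exact mul_dvd_mul_left g (Finset.gcd_dvd (Finset.mem_univ i)))
      rwa [← hg] at h1
    exact Nat.dvd_one.mp ((Nat.mul_dvd_mul_iff_left hgpos).mp hdd)
  have hney : y i1 ≠ y j1 := by
    intro h
    exact hne2 (by rw [hxy i1, hxy j1, h])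
  have h2y : ∃ i2, 2 ≤ y i2 := by
    rcases Nat.lt_or_ge (y i1) 2 with h | h
    · have h1 : y i1 = 1 := by have := hy i1; omega
      refine ⟨j1, ?_⟩
      have := hy j1
      rcases Nat.lt_or_ge (y j1) 2 with h' | h'
      · exfalso; apply hney; omega
      · exact h'
    · exact ⟨i1, h⟩
  obtain ⟨i2, h2⟩ := h2y
  have hE2 : 2 ≤ S y 1 := by
    calc 2 ≤ y i2 := h2
      _ = y i2 ^ 1 := (pow_one _).symm
      _ ≤ ∑ i, y i ^ 1 := Finset.single_le_sum (f := fun i => y i ^ 1)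
            (fun i _ => Nat.zero_le _) (Finset.mem_univ i2)
      _ = S y 1 := rfl
  set E := S y 1 with hE
  obtain ⟨a₀, q₀, ha₀, hq₀, hSC₀⟩ := base_exists hy hgy hk
  have hGood₀ : Good y a₀ q₀ ∅ := by
    refine ⟨ha₀, hq₀, ?_, ?_, fun p hp hex => hSC₀ p hp hex⟩
    · intro p hp; exact absurd hp (Finset.notMem_empty p)
    · intro p hp; exact absurd hp (Finset.notMem_empty p)
  set tw : ℕ → ℕ := fun L => Nat.rec (q₀ * 1 * E ^ (a₀ + 1)) (fun _ prev => E ^ (9 * prev)) L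
    with htwdef
  have htw0 : tw 0 = q₀ * 1 * E ^ (a₀ + 1) := rfl
  have htwS : ∀ L, tw (L + 1) = E ^ (9 * tw L) := fun L => rfl
  have htw1 : ∀ L, 1 ≤ tw L := by
    intro L
    induction L with
    | zero =>
        rw [htw0]
        have h1 : 1 ≤ E ^ (a₀ + 1) := Nat.one_le_pow _ _ (by omega)
        calc 1 = 1 * 1 * 1 := by ring
          _ ≤ q₀ * 1 * E ^ (a₀ + 1) := Nat.mul_le_mul (Nat.mul_le_mul hq₀ (le_refl 1)) h1
    | succ L ih =>
        rw [htwS]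
        exact Nat.one_le_pow _ _ (by omega)
  -- the chain of invariants
  have chain : ∀ L, ∃ a q F, Good y a q F ∧ L ≤ F.card ∧
      q * (∏ p ∈ F, p) * E ^ (a + 1) ≤ tw L := by
    intro L
    induction L with
    | zero =>
        refine ⟨a₀, q₀, ∅, hGood₀, Nat.zero_le _, ?_⟩
        rw [htw0, Finset.prod_empty]
    | succ L ih =>
        obtain ⟨a, q, F, hG, hcard, hΦ⟩ := ih
        obtain ⟨a', q', p', hp', hp'F, hG', haa', hp'S, hq'e, ha'b⟩ :=
          main_step hy hgy hk h2 hG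
        have hP1 : 1 ≤ ∏ p ∈ F, p := by
          rw [Nat.one_le_iff_ne_zero]
          apply Nat.pos_iff_ne_zero.mp
          exact Finset.prod_pos (fun p hp => (hG.2.2.1 p hp).pos)
        refine ⟨a', q', insert p' F, hG', ?_, ?_⟩
        · rw [Finset.card_insert_of_notMem hp'F]; omega
        · calc q' * (∏ p ∈ insert p' F, p) * E ^ (a' + 1)
              ≤ E ^ (9 * (q * (∏ p ∈ F, p) * E ^ (a + 1))) :=
                phi_step hy hk hE2 hG.1 hG.2.1 hP1 hp'F haa' ha'b hq'e hp'S
            _ ≤ E ^ (9 * tw L) := Nat.pow_le_pow_right (by omega) (by omega)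
            _ = tw (L + 1) := (htwS L).symm
  -- the tower constant
  set Cn := E ^ (9 * (tw 0 + 1)) with hCn
  have hCn2 : 2 ≤ Cn := by
    calc 2 ≤ E := hE2
      _ = E ^ 1 := (pow_one E).symm
      _ ≤ E ^ (9 * (tw 0 + 1)) := Nat.pow_le_pow_right (by omega) (by omega)
  have tower_ge : ∀ L, 1 ≤ L → (L + 2) * tw L ≤ twN Cn L := by
    intro L hL
    induction L with
    | zero => omega
    | succ L ih =>
      rcases Nat.eq_zero_or_pos L with rfl | hL1
      · -- L + 1 = 1
        show 3 * tw 1 ≤ twN Cn 1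
        have h1 : twN Cn 1 = Cn := by
          show Cn ^ twN Cn 0 = Cn
          show Cn ^ 1 = Cn
          exact pow_one Cn
        have h2'' : tw 1 = E ^ (9 * tw 0) := htwS 0
        rw [h1, h2'', hCn]
        have h3 : 9 * tw 0 + 9 = 9 * (tw 0 + 1) := by ring
        calc 3 * E ^ (9 * tw 0) ≤ E ^ 9 * E ^ (9 * tw 0) := by
              have : 3 ≤ E ^ 9 := by
                calc 3 ≤ 2 ^ 9 := by norm_num
                  _ ≤ E ^ 9 := Nat.pow_le_pow_left hE2 9
              exact Nat.mul_le_mul_right _ this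
          _ = E ^ (9 * tw 0 + 9) := by rw [← pow_add]; ring_nf
          _ = E ^ (9 * (tw 0 + 1)) := by rw [h3]
      · have hIH := ih hL1
        have hmono : Cn ^ ((L + 2) * tw L) ≤ Cn ^ twN Cn L :=
          Nat.pow_le_pow_right (by omega) hIH
        have hCnpow : Cn ^ ((L + 2) * tw L) = E ^ (9 * (tw 0 + 1) * ((L + 2) * tw L)) := by
          rw [hCn, ← pow_mul]
        have hexp : 9 * tw L + (L + 1) ≤ 9 * (tw 0 + 1) * ((L + 2) * tw L) := by
          have h1 : 1 ≤ tw L := htw1 L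
          have e1 : 9 * ((L + 2) * tw L) ≤ 9 * (tw 0 + 1) * ((L + 2) * tw L) := by
            have h9 : 9 ≤ 9 * (tw 0 + 1) := by omega
            exact Nat.mul_le_mul_right _ h9
          have e2 : 9 * ((L + 2) * tw L) = 9 * ((L + 1) * tw L) + 9 * tw L := by ring
          have e3 : L + 1 ≤ (L + 1) * tw L := by
            calc L + 1 = (L + 1) * 1 := by ring
              _ ≤ (L + 1) * tw L := Nat.mul_le_mul_left _ h1
          omega
        have hfin : (L + 3) * tw (L + 1) ≤ E ^ (9 * (tw 0 + 1) * ((L + 2) * tw L)) := by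
          rw [htwS]
          calc (L + 3) * E ^ (9 * tw L) ≤ E ^ (L + 1) * E ^ (9 * tw L) := by
                have : L + 3 ≤ E ^ (L + 1) := by
                  have hA := Nat.lt_two_pow_self (n := L)
                  calc L + 3 ≤ 2 * 2 ^ L := by omega
                    _ = 2 ^ (L + 1) := by rw [pow_succ]; ring
                    _ ≤ E ^ (L + 1) := Nat.pow_le_pow_left hE2 _
                exact Nat.mul_le_mul_right _ this
            _ = E ^ ((L + 1) + 9 * tw L) := by rw [← pow_add]
            _ ≤ E ^ (9 * (tw 0 + 1) * ((L + 2) * tw L)) := by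
                refine Nat.pow_le_pow_right (by omega) (by omega)
        calc (L + 1 + 2) * tw (L + 1) = (L + 3) * tw (L + 1) := by ring_nf
          _ ≤ E ^ (9 * (tw 0 + 1) * ((L + 2) * tw L)) := hfin
          _ = Cn ^ ((L + 2) * tw L) := hCnpow.symm
          _ ≤ Cn ^ twN Cn L := hmono
          _ = twN Cn (L + 1) := rfl
  refine ⟨(Cn : ℝ), by exact_mod_cast (show 1 < Cn by omega), ?_⟩
  intro N
  obtain ⟨a, q, F, hG, hcard, hΦb⟩ := chain (N + 1)
  have ha1 : 1 ≤ a := hG.1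
  have hq1 : 1 ≤ q := hG.2.1
  have hP1 : 1 ≤ ∏ p ∈ F, p := by
    rw [Nat.one_le_iff_ne_zero]
    apply Nat.pos_iff_ne_zero.mp
    exact Finset.prod_pos (fun p hp => (hG.2.2.1 p hp).pos)
  refine ⟨a + N * q, ?_, by omega, ?_⟩
  · have : N * 1 ≤ N * q := Nat.mul_le_mul_left N hq1
    omega
  · intro l hl
    rw [tower_cast Cn l] at hl
    have hln : twN Cn l ≤ a + N * q := by exact_mod_cast hl
    have hEa : a + 1 ≤ E ^ (a + 1) := (Nat.lt_pow_self hE2).le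
    have hEp1 : 1 ≤ E ^ (a + 1) := Nat.one_le_pow _ _ (by omega)
    have hq_tw : q ≤ tw (N + 1) := by
      have h5 : q * 1 * 1 ≤ q * (∏ p ∈ F, p) * E ^ (a + 1) :=
        Nat.mul_le_mul (Nat.mul_le_mul_left q hP1) hEp1
      have h6 : q * 1 * 1 = q := by ring
      omega
    have ha_tw : a ≤ tw (N + 1) := by
      have h5 : 1 * 1 * E ^ (a + 1) ≤ q * (∏ p ∈ F, p) * E ^ (a + 1) :=
        Nat.mul_le_mul (Nat.mul_le_mul hq1 hP1) (le_refl _)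
      have h6 : 1 * 1 * E ^ (a + 1) = E ^ (a + 1) := by ring
      omega
    have hnlt : a + N * q < twN Cn (N + 1) := by
      have h1 := tower_ge (N + 1) (by omega)
      have h2' : N * q ≤ N * tw (N + 1) := Nat.mul_le_mul_left N hq_tw
      have h3 : (N + 1 + 2) * tw (N + 1) = N * tw (N + 1) + 3 * tw (N + 1) := by ring
      have h4 := htw1 (N + 1)
      omega
    have hlt : l < N + 1 := by
      by_contra hcon
      push_neg at hcon
      have := (twN_strictMono hCn2).monotone hcon
      omega
    have hsubF : F ⊆ (S y (a + N * q)).primeFactors := by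
      intro p hp
      exact Nat.mem_primeFactors.mpr ⟨hG.2.2.1 p hp, hG.2.2.2.1 p hp N, (S_pos hy hk _).ne'⟩
    have hxs : (∑ i, x i ^ (a + N * q)) = g ^ (a + N * q) * S y (a + N * q) := by
      calc ∑ i, x i ^ (a + N * q) = ∑ i, (g ^ (a + N * q) * y i ^ (a + N * q)) := by
            refine Finset.sum_congr rfl fun i _ => ?_
            rw [hxy i, mul_pow]
        _ = g ^ (a + N * q) * ∑ i, y i ^ (a + N * q) := (Finset.mul_sum _ _ _).symm
        _ = g ^ (a + N * q) * S y (a + N * q) := rfl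
    have hsub2 : (S y (a + N * q)).primeFactors ⊆ (∑ i, x i ^ (a + N * q)).primeFactors := by
      rw [hxs]
      refine Nat.primeFactors_mono (dvd_mul_left _ _) ?_
      exact (Nat.mul_pos (pow_pos hgpos _) (S_pos hy hk _)).ne'
    calc l < N + 1 := hlt
      _ ≤ F.card := hcard
      _ ≤ (S y (a + N * q)).primeFactors.card := Finset.card_le_card hsubF
      _ ≤ (∑ i, x i ^ (a + N * q)).primeFactors.card := Finset.card_le_card hsub2
end

section
/- Let x and y be positive integers with x ≠ y and gcd(x,y) = 1. Then the set of primes dividing x^n + y^n for some n ≥ 1 is infinite. -/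
/-- Key lemma: an odd prime cannot divide both `x^(2^i)+y^(2^i)` and
`x^(2^j)+y^(2^j)` for `i < j`, when `x,y` are coprime. -/
lemma key_no_common_odd_prime (x y : ℕ) (hcop : Nat.Coprime x y) (p : ℕ)
    (hp : p.Prime) (hp2 : p ≠ 2) (i j : ℕ) (hij : i < j)
    (h1 : p ∣ x ^ 2 ^ i + y ^ 2 ^ i) (h2 : p ∣ x ^ 2 ^ j + y ^ 2 ^ j) : False := by
  haveI : Fact p.Prime := ⟨hp⟩
  have c1 : ((x : ZMod p)) ^ 2 ^ i + (y : ZMod p) ^ 2 ^ i = 0 := by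
    have := (ZMod.natCast_eq_zero_iff _ p).mpr h1
    push_cast at this
    exact this
  have c2 : ((x : ZMod p)) ^ 2 ^ j + (y : ZMod p) ^ 2 ^ j = 0 := by
    have := (ZMod.natCast_eq_zero_iff _ p).mpr h2
    push_cast at this
    exact this
  set a : ZMod p := (x : ZMod p)
  set b : ZMod p := (y : ZMod p)
  have ha : a ^ 2 ^ i = -b ^ 2 ^ i := by linear_combination c1
  have hje : 2 ^ j = 2 ^ i * 2 ^ (j - i) := by
    rw [← pow_add]
    congr 1
    omega
  have heven : Even (2 ^ (j - i)) := by
    have : j - i ≠ 0 := by omega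
    exact (Nat.even_pow).mpr ⟨even_two, this⟩
  have haj : a ^ 2 ^ j = b ^ 2 ^ j := by
    rw [hje, pow_mul, ha, heven.neg_pow, ← pow_mul]
  have h2b : (2 : ZMod p) * b ^ 2 ^ j = 0 := by
    linear_combination c2 - haj
  have h2ne : (2 : ZMod p) ≠ 0 := by
    intro h
    have hd : (p : ℕ) ∣ 2 := by
      have := (ZMod.natCast_eq_zero_iff 2 p).mp (by push_cast; exact h)
      exact this
    exact hp2 ((Nat.prime_dvd_prime_iff_eq hp Nat.prime_two).mp hd)
  have hb : b = 0 := by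
    rcases mul_eq_zero.mp h2b with h | h
    · exact absurd h h2ne
    · exact pow_eq_zero_iff (by positivity) |>.mp h
  have ha0 : a = 0 := by
    have : a ^ 2 ^ j = 0 := by rw [haj, hb]; simp
    exact pow_eq_zero_iff (by positivity) |>.mp this
  have hpx : p ∣ x := (ZMod.natCast_eq_zero_iff x p).mp ha0
  have hpy : p ∣ y := (ZMod.natCast_eq_zero_iff y p).mp hb
  have : p ∣ Nat.gcd x y := Nat.dvd_gcd hpx hpy
  rw [hcop] at this
  exact hp.one_lt.ne' (Nat.dvd_one.mp this)

lemma exists_odd_prime_factor (x y e : ℕ) (hx : 0 < x) (hy : 0 < y)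
    (hne : x ≠ y) (hcop : Nat.Coprime x y) (he : 2 ≤ e) (heven : Even e) :
    ∃ p, p.Prime ∧ p ≠ 2 ∧ p ∣ x ^ e + y ^ e := by
  set N := x ^ e + y ^ e with hN
  have hbig : 2 ≤ x ∨ 2 ≤ y := by omega
  have hN5 : 5 ≤ N := by
    have h1x : 1 ≤ x ^ e := Nat.one_le_pow _ _ hx
    have h1y : 1 ≤ y ^ e := Nat.one_le_pow _ _ hy
    rcases hbig with h | h
    · have : 2 ^ e ≤ x ^ e := Nat.pow_le_pow_left h e
      have : 2 ^ 2 ≤ 2 ^ e := Nat.pow_le_pow_right (by norm_num) he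
      omega
    · have : 2 ^ e ≤ y ^ e := Nat.pow_le_pow_left h e
      have : 2 ^ 2 ≤ 2 ^ e := Nat.pow_le_pow_right (by norm_num) he
      omega
  rcases Nat.even_or_odd N with hNe | hNo
  · -- N even: then x, y both odd
    have hxo : Odd x ∧ Odd y := by
      rcases Nat.even_or_odd x with hx2 | hx2 <;> rcases Nat.even_or_odd y with hy2 | hy2
      · exfalso
        have : (2 : ℕ) ∣ Nat.gcd x y := Nat.dvd_gcd hx2.two_dvd hy2.two_dvd
        rw [hcop] at this; omega
      · exfalso
        have h1 : Even (x ^ e) := Nat.even_pow.mpr ⟨hx2, by omega⟩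
        have h2 : Odd (y ^ e) := hy2.pow
        have : Odd N := h1.add_odd h2
        exact (Nat.not_odd_iff_even.mpr hNe) this
      · exfalso
        have h1 : Odd (x ^ e) := hx2.pow
        have h2 : Even (y ^ e) := Nat.even_pow.mpr ⟨hy2, by omega⟩
        have : Odd N := h1.add_even h2
        exact (Nat.not_odd_iff_even.mpr hNe) this
      · exact ⟨hx2, hy2⟩
    obtain ⟨m, hm⟩ := heven
    have sqmod : ∀ a : ℕ, Odd a → a ^ e % 4 = 1 := by
      intro a ha
      have hoam : Odd (a ^ m) := ha.pow
      obtain ⟨t, ht⟩ := hoam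
      have : a ^ e = 4 * (t * t + t) + 1 := by
        rw [hm, pow_add, ht]; ring
      rw [this, Nat.add_comm, Nat.add_mul_mod_self_left]
    have hx4 := sqmod x hxo.1
    have hy4 := sqmod y hxo.2
    have hN4 : N % 4 = 2 := by
      rw [hN, Nat.add_mod, hx4, hy4]
    set M := N / 2 with hM
    have hMdvd : M ∣ N := Nat.div_dvd_of_dvd (by omega)
    have hModd : Odd M := by
      rw [Nat.odd_iff]; omega
    have hM2 : 2 ≤ M := by omega
    refine ⟨M.minFac, Nat.minFac_prime (by omega), ?_, dvd_trans (Nat.minFac_dvd M) hMdvd⟩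
    intro h
    have := Nat.minFac_dvd M
    rw [h] at this
    rw [Nat.odd_iff] at hModd
    omega
  · refine ⟨N.minFac, Nat.minFac_prime (by omega), ?_, Nat.minFac_dvd N⟩
    intro h
    have := Nat.minFac_dvd N
    rw [h] at this
    rw [Nat.odd_iff] at hNo
    omega

/-- For coprime positive integers `x ≠ y`, infinitely many
primes divide `x^n + y^n` for some `n ≥ 1`. -/
theorem infinite_primes_dvd_pow_add_pow (x y : ℕ) (hx : 0 < x) (hy : 0 < y)
    (hne : x ≠ y) (hcop : Nat.Coprime x y) :
    {p : ℕ | p.Prime ∧ ∃ n : ℕ, 1 ≤ n ∧ p ∣ x ^ n + y ^ n}.Infinite := by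
  have hex : ∀ k : ℕ, ∃ p, p.Prime ∧ p ≠ 2 ∧ p ∣ x ^ 2 ^ (k + 1) + y ^ 2 ^ (k + 1) := by
    intro k
    apply exists_odd_prime_factor x y _ hx hy hne hcop
    · calc (2:ℕ) = 2 ^ 1 := rfl
        _ ≤ 2 ^ (k + 1) := Nat.pow_le_pow_right (by norm_num) (by omega)
    · exact (Nat.even_pow).mpr ⟨even_two, by omega⟩
  choose f hf1 hf2 hf3 using hex
  apply Set.infinite_of_injective_forall_mem (f := f)
  · intro i j hij
    by_contra hne'
    rcases Nat.lt_or_ge i j with h | h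
    · exact key_no_common_odd_prime x y hcop (f i) (hf1 i) (hf2 i) (i + 1) (j + 1)
        (by omega) (hf3 i) (hij ▸ hf3 j)
    · have h' : j < i := by omega
      exact key_no_common_odd_prime x y hcop (f i) (hf1 i) (hf2 i) (j + 1) (i + 1)
        (by omega) (hij ▸ hf3 j) (hf3 i)
  · intro k
    exact ⟨hf1 k, 2 ^ (k + 1), Nat.one_le_two_pow, hf3 k⟩
end

section
/- Let k ≥ 2, let c₁,…,c_k be nonzero integers, and x₁,…,x_k pairwise distinct integers with 2 ≤ x₁ < ⋯ < x_k and gcd(x₁,…,x_k) = 1. Suppose additionally that every nonempty subsum Σ_{i∈I} cᵢxᵢ^n is nonzero for all sufficiently large n. Then the sequence n ↦ ω(c₁x₁^n + ⋯ + c_k x_k^n) is unbounded. -/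
open Finset Matrix

lemma aux_pow_succ (b : ℕ) (n : ℕ) : b^(n+1) + (n+1)*b^n ≤ (b+1)^(n+1) := by
  induction n with
  | zero => simp [pow_succ]
  | succ n ih =>
    have h2 : (b^(n+1) + (n+1)*b^n) * (b+1) ≤ (b+1)^(n+1) * (b+1) :=
      Nat.mul_le_mul_right _ ih
    have h3 : b^(n+1+1) + (n+1+1)*b^(n+1) ≤ (b^(n+1) + (n+1)*b^n) * (b+1) := by
      simp only [pow_succ]
      nlinarith [Nat.zero_le (b^n)]
    calc b^(n+1+1) + (n+1+1)*b^(n+1) ≤ (b^(n+1) + (n+1)*b^n) * (b+1) := h3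
      _ ≤ (b+1)^(n+1) * (b+1) := h2
      _ = (b+1)^(n+1+1) := by ring

lemma aux_cramer {k' : ℕ} (v w : Fin k' → ℤ) (q : ℤ) (E : ℕ)
    (h : ∀ j : Fin k', q^E ∣ ∑ t, w t * v t ^ (j:ℕ)) (t : Fin k') :
    q^E ∣ (∏ i, ∏ j ∈ Finset.Ioi i, (v j - v i)) * w t := by
  classical
  set M : Matrix (Fin k') (Fin k') ℤ := (Matrix.vandermonde v)ᵀ with hM
  have hMv : ∀ j, (M.mulVec w) j = ∑ t, w t * v t ^ (j:ℕ) := by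
    intro j
    simp [Matrix.mulVec, dotProduct, hM, Matrix.vandermonde, mul_comm]
  have key : (M.adjugate.mulVec (M.mulVec w)) = M.det • w := by
    rw [Matrix.mulVec_mulVec, Matrix.adjugate_mul, Matrix.smul_mulVec,
      Matrix.one_mulVec]
  have hdvd : q^E ∣ (M.adjugate.mulVec (M.mulVec w)) t := by
    show q^E ∣ ∑ j, M.adjugate t j * (M.mulVec w) j
    apply Finset.dvd_sum
    intro j _
    exact Dvd.dvd.mul_left (by rw [hMv]; exact h j) _
  rw [key] at hdvd
  have hdet : M.det = ∏ i, ∏ j ∈ Finset.Ioi i, (v j - v i) := by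
    rw [hM, Matrix.det_transpose, Matrix.det_vandermonde]
  simpa [hdet, smul_eq_mul] using hdvd


lemma aux_fermat_step (k : ℕ) (c x : Fin k → ℤ) (p : ℕ) (hp : p.Prime)
    (hpx : ∀ i, ¬ (p:ℤ) ∣ x i) (a t : ℕ) :
    ((p:ℤ) ∣ ∑ i, c i * x i ^ (a + t*(p-1))) ↔ ((p:ℤ) ∣ ∑ i, c i * x i ^ a) := by
  haveI := Fact.mk hp
  rw [← ZMod.intCast_zmod_eq_zero_iff_dvd, ← ZMod.intCast_zmod_eq_zero_iff_dvd]
  have : ((∑ i, c i * x i ^ (a + t*(p-1)) : ℤ) : ZMod p)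
      = ((∑ i, c i * x i ^ a : ℤ) : ZMod p) := by
    push_cast
    apply Finset.sum_congr rfl
    intro i _
    have hx0 : ((x i : ZMod p)) ≠ 0 := by
      rw [Ne, ZMod.intCast_zmod_eq_zero_iff_dvd]; exact hpx i
    rw [pow_add, mul_comm t (p-1), pow_mul, ZMod.pow_card_sub_one_eq_one hx0, one_pow, mul_one]
  rw [this]

lemma aux_fermat (k : ℕ) (c x : Fin k → ℤ) (p : ℕ) (hp : p.Prime)
    (hpx : ∀ i, ¬ (p:ℤ) ∣ x i) {a b : ℕ} (hab : a ≡ b [MOD p-1])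
    (hd : (p:ℤ) ∣ ∑ i, c i * x i ^ a) : (p:ℤ) ∣ ∑ i, c i * x i ^ b := by
  have hp1 : 1 ≤ p - 1 := by have := hp.two_le; omega
  rcases le_total a b with h | h
  · obtain ⟨t, ht⟩ := (Nat.modEq_iff_dvd' h).mp hab
    have : b = a + t * (p-1) := by rw [mul_comm]; omega
    rw [this, aux_fermat_step k c x p hp hpx]
    exact hd
  · obtain ⟨t, ht⟩ := (Nat.modEq_iff_dvd' h).mp hab.symm
    have : a = b + t * (p-1) := by rw [mul_comm]; omega
    rw [this, aux_fermat_step k c x p hp hpx] at hd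
    exact hd


lemma aux_pow_succ' (b : ℕ) (n : ℕ) : b^(n+1) + (n+1)*b^n ≤ (b+1)^(n+1) :=
  aux_pow_succ b n

lemma aux_growth_nat (Y : ℕ) (hY : 2 ≤ Y) (C : ℕ) :
    ∀ n, 2*C*Y + 1 ≤ n → 2^n + 2*C*Y^n ≤ (Y+1)^n := by
  intro n hn
  obtain ⟨m, rfl⟩ : ∃ m, n = m + 1 := ⟨n - 1, by omega⟩
  have h1 := aux_pow_succ' Y m
  have h2 : 2^(m+1) ≤ Y^(m+1) := Nat.pow_le_pow_left hY _
  have h3 : 2*C*Y^(m+1) ≤ (m+1)*Y^m := by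
    rw [pow_succ, mul_comm (Y^m) Y, ← mul_assoc]
    exact Nat.mul_le_mul_right _ (by omega)
  omega

lemma aux_growth (k : ℕ) (hk : 2 ≤ k) (c : Fin k → ℤ) (hc : ∀ i, c i ≠ 0)
    (x : Fin k → ℤ) (hx2 : ∀ i, 2 ≤ x i) (hmono : StrictMono x) :
    ∃ N : ℕ, ∀ n ≥ N, 2^n ≤ (∑ i, c i * x i ^ n).natAbs := by
  have hk1 : k - 1 < k := by omega
  have hk2 : k - 2 < k := by omega
  set K : Fin k := ⟨k-1, hk1⟩
  set K2 : Fin k := ⟨k-2, hk2⟩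
  set Y : ℤ := x K2 with hY
  have hY2 : 2 ≤ Y := hx2 K2
  have hXY : Y + 1 ≤ x K := by
    have : K2 < K := by
      apply Fin.mk_lt_mk.mpr; omega
    exact Int.add_one_le_iff.mpr (hmono this)
  set CM : ℤ := ∑ i, |c i| with hCM
  have hCM0 : 0 ≤ CM := Finset.sum_nonneg fun i _ => abs_nonneg _
  -- bound on the tail
  have tail : ∀ n : ℕ, |∑ i ∈ univ.erase K, c i * x i ^ n| ≤ CM * Y^n := by
    intro n
    calc |∑ i ∈ univ.erase K, c i * x i ^ n| ≤ ∑ i ∈ univ.erase K, |c i * x i ^ n| :=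
          Finset.abs_sum_le_sum_abs _ _
      _ ≤ ∑ i ∈ univ.erase K, |c i| * Y^n := by
          apply Finset.sum_le_sum
          intro i hi
          rw [abs_mul]
          apply mul_le_mul_of_nonneg_left _ (abs_nonneg _)
          have hxi : x i ≤ Y := by
            have hiK : i ≠ K := (Finset.mem_erase.mp hi).1
            have : i ≤ K2 := by
              rw [Fin.le_def]
              have := i.isLt
              have : i.val ≠ k - 1 := fun h => hiK (Fin.ext h)
              simp only [K2]
              omega
            exact hmono.monotone this
          rw [abs_pow, abs_of_nonneg (by linarith [hx2 i] : (0:ℤ) ≤ x i)]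
          exact pow_le_pow_left₀ (by linarith [hx2 i]) hxi n
      _ ≤ ∑ i ∈ univ, |c i| * Y^n := by
          apply Finset.sum_le_sum_of_subset_of_nonneg (Finset.erase_subset _ _)
          intro i _ _
          positivity
      _ = CM * Y^n := by rw [hCM, Finset.sum_mul]
  -- growth of the main term
  set YN : ℕ := Y.toNat with hYN
  have hYcast : (YN : ℤ) = Y := Int.toNat_of_nonneg (by linarith)
  set CN : ℕ := CM.toNat with hCN
  have hCcast : (CN : ℤ) = CM := Int.toNat_of_nonneg hCM0
  refine ⟨2*CN*YN + 1, fun n hn => ?_⟩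
  have hYN2 : 2 ≤ YN := by omega
  have hgrow := aux_growth_nat YN hYN2 CN n hn
  have hgrowZ : (2:ℤ)^n + 2*CM*Y^n ≤ (Y+1)^n := by
    have := (Nat.cast_le (α := ℤ)).mpr hgrow
    push_cast at this
    rw [hYcast, hCcast] at this
    linarith
  have hXpow : (Y+1)^n ≤ (x K)^n :=
    pow_le_pow_left₀ (by linarith) hXY n
  have hsplit : (∑ i, c i * x i ^ n) = c K * x K ^ n + ∑ i ∈ univ.erase K, c i * x i ^ n := by
    rw [← Finset.add_sum_erase _ _ (Finset.mem_univ K)]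
  have habs : (2:ℤ)^n ≤ |∑ i, c i * x i ^ n| := by
    have h1 : |c K * x K ^ n| ≥ (x K)^n := by
      rw [abs_mul, abs_pow, abs_of_nonneg (by linarith [hx2 K] : (0:ℤ) ≤ x K)]
      nlinarith [Int.one_le_abs (hc K), pow_pos (by linarith [hx2 K] : (0:ℤ) < x K) n]
    have h2 := tail n
    have h3 : |∑ i, c i * x i ^ n| ≥ |c K * x K ^ n| - |∑ i ∈ univ.erase K, c i * x i ^ n| := by
      rw [hsplit]
      set A := c K * x K ^ n
      set B := ∑ i ∈ univ.erase K, c i * x i ^ n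
      have : |A| ≤ |A + B| + |B| := by
        calc |A| = |(A + B) - B| := by ring_nf
          _ ≤ |A + B| + |B| := abs_sub _ _
      linarith
    have hY0 : (0:ℤ) < Y^n := pow_pos (by linarith) n
    nlinarith
  have : ((2:ℤ))^n ≤ ((∑ i, c i * x i ^ n).natAbs : ℤ) := by
    rwa [Int.abs_eq_natAbs] at habs
  exact_mod_cast this

lemma aux_step (k : ℕ) (hk : 2 ≤ k) (c : Fin k → ℤ) (hc : ∀ i, c i ≠ 0)
    (x : Fin k → ℤ) (hx2 : ∀ i, 2 ≤ x i) (hmono : StrictMono x)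
    (hgcd : Finset.univ.gcd x = 1)
    (Ng : ℕ) (hNg : ∀ n ≥ Ng, 2^n ≤ (∑ i, c i * x i ^ n).natAbs)
    (P : Finset ℕ) (L n₁ : ℕ) (hL : 1 ≤ L)
    (hP : ∀ p ∈ P, p.Prime ∧ ¬ (p:ℤ) ∣ ∏ i, x i)
    (hdvd : ∀ n, n ≡ n₁ [MOD L] → ∀ p ∈ P, (p:ℤ) ∣ ∑ i, c i * x i ^ n)
    (N : ℕ) :
    ∃ (q : ℕ) (n₂ : ℕ), q.Prime ∧ ¬ (q:ℤ) ∣ (∏ i, x i) ∧ q ∉ P ∧ N ≤ n₂ ∧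
      n₂ ≡ n₁ [MOD L] ∧ (q:ℤ) ∣ ∑ i, c i * x i ^ n₂ := by
  classical
  set S : ℕ → ℤ := fun n => ∑ i, c i * x i ^ n with hS
  by_contra hcon
  push_neg at hcon
  -- every prime factor of S n lies in Q, for n ≥ N in the progression
  set Q : Finset ℕ := P ∪ (∏ i, x i).natAbs.primeFactors with hQ
  have hxprod0 : (∏ i, x i) ≠ 0 := by
    apply Finset.prod_ne_zero_iff.mpr
    intro i _
    have := hx2 i; omega
  have hQmem : ∀ n, N ≤ n → n ≡ n₁ [MOD L] → ∀ q : ℕ, q.Prime → (q:ℤ) ∣ S n → q ∈ Q := by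
    intro n hn hmod q hq hqS
    by_cases hqx : (q:ℤ) ∣ ∏ i, x i
    · apply Finset.mem_union_right
      rw [Nat.mem_primeFactors]
      refine ⟨hq, ?_, Int.natAbs_ne_zero.mpr hxprod0⟩
      have := Int.natAbs_dvd_natAbs.mpr hqx
      simpa using this
    · by_cases hqP : q ∈ P
      · exact Finset.mem_union_left _ hqP
      · exact absurd hqS (hcon q n hq hqx hqP hn hmod)
  have hQprime : ∀ q ∈ Q, q.Prime := by
    intro q hqQ
    rcases Finset.mem_union.mp hqQ with h | h
    · exact (hP q h).1
    · exact Nat.prime_of_mem_primeFactors h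
  -- the base point A
  set A : ℕ := n₁ + L * (Ng + N + 2) with hA
  have hAmod : A ≡ n₁ [MOD L] := by
    unfold Nat.ModEq
    simp [hA, Nat.add_mul_mod_self_left]
  have hAge : Ng + N + 2 ≤ A := by
    have : L * (Ng + N + 2) ≥ 1 * (Ng + N + 2) := Nat.mul_le_mul_right _ hL
    omega
  have hprogmod : ∀ m : ℕ, A + m * L ≡ n₁ [MOD L] := by
    intro m
    calc A + m * L ≡ A [MOD L] := by
          unfold Nat.ModEq
          simp [Nat.add_mul_mod_self_right]
      _ ≡ n₁ [MOD L] := hAmod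
  have hprogge : ∀ m : ℕ, A ≤ A + m * L := fun m => Nat.le_add_right _ _
  have hS2 : ∀ m : ℕ, 2 ≤ (S (A + m * L)).natAbs := by
    intro m
    have h1 : Ng ≤ A + m * L := le_trans (by omega) (hprogge m)
    have := hNg (A + m * L) h1
    have h2 : 2^(A + m*L) ≥ 2^2 := Nat.pow_le_pow_right (by norm_num) (le_trans (by omega) (hprogge m))
    simp only [hS]
    omega
  have h20 : 2 ≤ (S A).natAbs := by simpa using hS2 0
  have hQne : Q.Nonempty := by
    obtain ⟨q, hq, hqdvd⟩ := Nat.exists_prime_and_dvd (n := (S A).natAbs) (by omega)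
    refine ⟨q, hQmem A (by omega) hAmod q hq ?_⟩
    rw [← Int.dvd_natAbs]
    exact_mod_cast hqdvd
  set B : ℕ := Q.max' hQne with hB
  set W : ℕ := Q.card with hW
  set G : ℕ := B * W with hG
  have hG1 : 1 ≤ G := by
    have hBQ := Q.max'_mem hQne
    have hB2 := (hQprime _ hBQ).two_le
    have hW1 : 1 ≤ W := Finset.card_pos.mpr hQne
    calc 1 ≤ 2 * 1 := by norm_num
      _ ≤ B * W := Nat.mul_le_mul hB2 hW1
  -- the coloring
  have color : ∀ m : ℕ, ∃ q, q ∈ Q ∧ ∃ e : ℕ,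
      (q:ℤ)^e ∣ S (A + m*L) ∧ A + m*L ≤ G*e + 1 := by
    intro m
    have hNn : N ≤ A + m * L := by have := hprogge m; omega
    have hNgn : Ng ≤ A + m * L := by have := hprogge m; omega
    set s : ℕ := (S (A + m * L)).natAbs with hs
    have hs0 : s ≠ 0 := by have := hS2 m; omega
    have hsQ : s.primeFactors ⊆ Q := by
      intro p hp
      have hpp := Nat.prime_of_mem_primeFactors hp
      have hpd := Nat.dvd_of_mem_primeFactors hp
      apply hQmem (A + m * L) hNn (hprogmod m) p hpp
      rw [← Int.dvd_natAbs]
      exact_mod_cast hpd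
    have hfact : ∏ p ∈ Q, p ^ s.factorization p = s := by
      conv_rhs => rw [← Nat.factorization_prod_pow_eq_self hs0]
      have hsup : s.factorization.support ⊆ Q := by
        rw [Nat.support_factorization]; exact hsQ
      exact (Finsupp.prod_of_support_subset s.factorization hsup
        (fun p e => p ^ e) (fun i _ => pow_zero i)).symm
    obtain ⟨p₀, hp₀Q, hmax⟩ := Finset.exists_max_image Q (fun p => p ^ s.factorization p) hQne
    set e : ℕ := s.factorization p₀ with he
    have hsle : s ≤ (p₀ ^ e) ^ W := by
      rw [← hfact, hW]
      exact Finset.prod_le_pow_card _ _ _ hmax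
    have hdvd1 : p₀ ^ e ∣ s := Nat.ordProj_dvd s p₀
    have h2n : 2 ^ (A + m * L) ≤ s := by
      have := hNg (A + m * L) hNgn
      simpa [hs, hS] using this
    have hup : (p₀ ^ e) ^ W ≤ 2 ^ (p₀ * e * W) := by
      calc (p₀ ^ e) ^ W ≤ ((2 ^ p₀) ^ e) ^ W := by
            apply Nat.pow_le_pow_left (Nat.pow_le_pow_left (le_of_lt (Nat.lt_two_pow_self (n := p₀))) e) W
        _ = 2 ^ (p₀ * e * W) := by rw [← pow_mul, ← pow_mul, mul_assoc]
    have hnle : A + m * L ≤ p₀ * e * W := by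
      have : 2 ^ (A + m * L) ≤ 2 ^ (p₀ * e * W) := le_trans h2n (le_trans hsle hup)
      exact (Nat.pow_le_pow_iff_right (by norm_num)).mp this
    refine ⟨p₀, hp₀Q, e, ?_, ?_⟩
    · rw [← Int.dvd_natAbs]
      have : ((p₀ ^ e : ℕ) : ℤ) ∣ ((s : ℕ) : ℤ) := Int.natCast_dvd_natCast.mpr hdvd1
      simpa [hs] using this
    · have hp₀B : p₀ ≤ B := Q.le_max' p₀ hp₀Q
      have : p₀ * e * W ≤ G * e := by
        rw [hG]
        calc p₀ * e * W ≤ B * e * W := by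
              apply Nat.mul_le_mul_right; exact Nat.mul_le_mul_right _ hp₀B
          _ = B * W * e := by ring
      omega
  -- choice coloring
  set C : ℕ → {r // r ∈ Q} := fun m => ⟨(color m).choose, (color m).choose_spec.1⟩ with hC
  have hCspec : ∀ m : ℕ, ∃ e : ℕ, ((C m : ℕ) : ℤ)^e ∣ S (A + m*L) ∧ A + m*L ≤ G*e + 1 :=
    fun m => (color m).choose_spec.2
  set CM : ℕ := ∑ i, (c i).natAbs with hCM
  have hktop : k - 1 < k := by omega
  set XB : ℕ := (x ⟨k-1, hktop⟩).natAbs with hXB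
  have hXBx : ((XB:ℕ):ℤ) = x ⟨k-1, hktop⟩ := by
    rw [hXB, Int.natCast_natAbs, abs_of_nonneg (by have := hx2 ⟨k-1, hktop⟩; omega)]
  have hXB2 : 2 ≤ XB := by
    have := hx2 ⟨k-1, hktop⟩; omega
  set j₀ : ℕ := G*CM + G*k*k*XB + G + 1 with hj₀
  obtain ⟨a, ha, b, q₀, hmc⟩ :=
    Combinatorics.exists_mono_homothetic_copy (Finset.range (j₀ + k)) C
  set q : ℕ := (q₀ : ℕ) with hq
  have hqQ : q ∈ Q := q₀.prop
  have hqprime : q.Prime := hQprime q hqQ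
  have hqZ : Prime (q:ℤ) := Nat.prime_iff_prime_int.mp hqprime
  set I : Finset (Fin k) := Finset.univ.filter (fun i => ¬ (q:ℤ) ∣ x i) with hI
  have hIne : I.Nonempty := by
    rw [Finset.filter_nonempty_iff]
    by_contra hcontra
    push_neg at hcontra
    have hdg : (q:ℤ) ∣ Finset.univ.gcd x := Finset.dvd_gcd (fun i hi => hcontra i hi)
    rw [hgcd] at hdg
    have h1 := Int.le_of_dvd one_pos hdg
    have h2 := hqprime.two_le
    omega
  set k' : ℕ := I.card with hk'
  have hk'pos : 0 < k' := Finset.card_pos.mpr hIne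
  have hk'le : k' ≤ k := by
    rw [hk']
    simpa using Finset.card_le_univ I
  set d : ℕ := a * L with hd
  have hd1 : 1 ≤ d := by
    have : 1 * 1 ≤ a * L := Nat.mul_le_mul ha hL
    omega
  set n₀ : ℕ := A + (a * j₀ + b) * L with hn₀
  have hj₀d : j₀ * d ≤ n₀ := by
    calc j₀ * d = a * j₀ * L := by rw [hd]; ring
      _ ≤ (a * j₀ + b) * L := Nat.mul_le_mul_right _ (by omega)
      _ ≤ n₀ := by rw [hn₀]; omega
  have hn₀2 : 2 ≤ n₀ := by
    have : 2 ≤ A := by omega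
    rw [hn₀]; omega
  set E : ℕ := (n₀ - 1) / G with hE
  have hEn₀ : E ≤ n₀ := le_trans (Nat.div_le_self _ _) (by omega)
  -- q^E divides the I-subsum at each point of the AP
  have hTdvd : ∀ j : Fin k', (q:ℤ)^E ∣ ∑ i ∈ I, c i * x i ^ (n₀ + (j:ℕ) * d) := by
    intro j
    have hjK : j₀ + (j:ℕ) ∈ Finset.range (j₀ + k) := by
      rw [Finset.mem_range]
      have := j.isLt
      omega
    have hcm := hmc _ hjK
    have hmexp : a • (j₀ + (j:ℕ)) + b = a * (j₀ + (j:ℕ)) + b := by simp [smul_eq_mul]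
    have hnm : A + (a * (j₀ + (j:ℕ)) + b) * L = n₀ + (j:ℕ) * d := by rw [hn₀, hd]; ring
    obtain ⟨e, he1, he2⟩ := hCspec (a * (j₀ + (j:ℕ)) + b)
    have hCq : ((C (a * (j₀ + (j:ℕ)) + b) : ℕ)) = q := by
      rw [← hmexp, hcm]
    rw [hCq, hnm] at he1
    rw [hnm] at he2
    have hG0 : 0 < G := by omega
    have hEe : E ≤ e := by
      have h1 : G * E ≤ n₀ - 1 := by
        rw [hE, mul_comm]
        exact Nat.div_mul_le_self _ _
      have h2 : n₀ - 1 ≤ G * e := by omega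
      have h3 : G * E ≤ G * e := le_trans h1 h2
      exact Nat.le_of_mul_le_mul_left h3 hG0
    have hqE : (q:ℤ)^E ∣ S (n₀ + (j:ℕ)*d) := dvd_trans (pow_dvd_pow _ hEe) he1
    have hsplit := Finset.sum_filter_add_sum_filter_not Finset.univ
      (fun i => (q:ℤ) ∣ x i) (fun i => c i * x i ^ (n₀ + (j:ℕ)*d))
    have hJdvd : (q:ℤ)^E ∣ ∑ i ∈ Finset.univ.filter (fun i => (q:ℤ) ∣ x i),
        c i * x i ^ (n₀ + (j:ℕ)*d) := by
      apply Finset.dvd_sum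
      intro i hi
      have hqx : (q:ℤ) ∣ x i := (Finset.mem_filter.mp hi).2
      have h1 : (q:ℤ)^(n₀ + (j:ℕ)*d) ∣ x i ^ (n₀ + (j:ℕ)*d) := pow_dvd_pow_of_dvd hqx _
      have h2 : (q:ℤ)^E ∣ (q:ℤ)^(n₀ + (j:ℕ)*d) := pow_dvd_pow _ (by omega)
      exact Dvd.dvd.mul_left (dvd_trans h2 h1) _
    have : (∑ i ∈ I, c i * x i ^ (n₀ + (j:ℕ)*d)) =
        S (n₀ + (j:ℕ)*d) - ∑ i ∈ Finset.univ.filter (fun i => (q:ℤ) ∣ x i),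
          c i * x i ^ (n₀ + (j:ℕ)*d) := by
      rw [hI, hS]
      simp only
      linarith [hsplit]
    rw [this]
    exact dvd_sub hqE hJdvd
  -- reindex the subsum over I by Fin k'
  have hIcard : I.card = k' := hk'.symm
  set g : Fin k' → Fin k := fun t => ((I.orderIsoOfFin hIcard t) : Fin k) with hg
  have hgmem : ∀ t, g t ∈ I := fun t => (I.orderIsoOfFin hIcard t).prop
  have hgmono : StrictMono g := by
    intro t t' htt
    have h1 : (I.orderIsoOfFin hIcard) t < (I.orderIsoOfFin hIcard) t' :=
      (I.orderIsoOfFin hIcard).lt_iff_lt.mpr htt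
    exact h1
  set v : Fin k' → ℤ := fun t => x (g t) ^ d with hv
  set w : Fin k' → ℤ := fun t => c (g t) * x (g t) ^ n₀ with hw
  have hreindex : ∀ f : Fin k → ℤ, ∑ t : Fin k', f (g t) = ∑ i ∈ I, f i := by
    intro f
    rw [← Finset.sum_coe_sort I f]
    exact Fintype.sum_equiv (I.orderIsoOfFin hIcard).toEquiv _ _ (fun t => rfl)
  have hsum : ∀ j : Fin k', ∑ t, w t * v t ^ (j:ℕ)
      = ∑ i ∈ I, c i * x i ^ (n₀ + (j:ℕ)*d) := by
    intro j
    rw [← hreindex (fun i => c i * x i ^ (n₀ + (j:ℕ)*d))]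
    apply Finset.sum_congr rfl
    intro t _
    rw [hw, hv]
    rw [pow_add, ← pow_mul]
    ring
  set t₀ : Fin k' := ⟨0, hk'pos⟩ with ht₀
  have hDC := aux_cramer v w (q:ℤ) E (fun j => by rw [hsum]; exact hTdvd j) t₀
  set D : ℤ := ∏ i, ∏ j ∈ Finset.Ioi i, (v j - v i) with hD
  set i₀ : Fin k := g t₀ with hi₀
  have hqxi : ¬ (q:ℤ) ∣ x i₀ := by
    have := hgmem t₀
    rw [hI, Finset.mem_filter] at this
    exact this.2
  have hDc : (q:ℤ)^E ∣ D * c i₀ := by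
    have h1 : D * w t₀ = (D * c i₀) * x i₀ ^ n₀ := by rw [hw]; ring
    rw [h1] at hDC
    exact hqZ.pow_dvd_of_dvd_mul_right E
      (fun hcon2 => hqxi (hqZ.dvd_of_dvd_pow hcon2)) hDC
  -- nonvanishing and size bound for D
  have hvmono : StrictMono v := by
    intro t t' htt
    rw [hv]
    have h1 : x (g t) < x (g t') := hmono (hgmono htt)
    have h2 : (0:ℤ) ≤ x (g t) := by have := hx2 (g t); omega
    exact pow_lt_pow_left₀ h1 h2 (by omega)
  have hDpos : 0 < D := by
    rw [hD]
    apply Finset.prod_pos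
    intro i _
    apply Finset.prod_pos
    intro j hj
    have := hvmono (Finset.mem_Ioi.mp hj)
    omega
  have hvle : ∀ t, v t ≤ ((XB:ℕ):ℤ)^d := by
    intro t
    rw [hv, hXBx]
    apply pow_le_pow_left₀ (by have := hx2 (g t); omega)
    apply hmono.monotone
    rw [Fin.le_def]
    simp only
    have := (g t).isLt
    omega
  have hvpos : ∀ t, 0 < v t := by
    intro t
    rw [hv]
    exact pow_pos (by have := hx2 (g t); omega) _
  have hXB1 : (1:ℤ) ≤ ((XB:ℕ):ℤ)^d := by
    rw [← one_pow d]
    apply pow_le_pow_left₀ one_pos.le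
    exact_mod_cast (by omega : 1 ≤ XB)
  have hDle : D ≤ (((XB:ℕ):ℤ)^d)^(k*k) := by
    rw [hD]
    have hinner : ∀ i : Fin k', ∏ j ∈ Finset.Ioi i, (v j - v i) ≤ (((XB:ℕ):ℤ)^d)^k' := by
      intro i
      calc ∏ j ∈ Finset.Ioi i, (v j - v i) ≤ (((XB:ℕ):ℤ)^d)^(Finset.Ioi i).card := by
            rw [← Finset.prod_const]
            apply Finset.prod_le_prod
            · intro j hj
              have h1 := hvmono (Finset.mem_Ioi.mp hj)
              omega
            · intro j hj
              have h1 := hvpos i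
              have h3 := hvle j
              omega
        _ ≤ (((XB:ℕ):ℤ)^d)^k' := by
            apply pow_le_pow_right₀ hXB1
            simpa using Finset.card_le_univ (Finset.Ioi i)
    calc ∏ i : Fin k', ∏ j ∈ Finset.Ioi i, (v j - v i)
        ≤ ∏ _i : Fin k', (((XB:ℕ):ℤ)^d)^k' := by
          apply Finset.prod_le_prod
          · intro i _
            apply Finset.prod_nonneg
            intro j hj
            have h1 := hvmono (Finset.mem_Ioi.mp hj)
            omega
          · intro i _
            exact hinner i
      _ = ((((XB:ℕ):ℤ)^d)^k')^k' := by
          rw [Finset.prod_const]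
          simp
      _ = (((XB:ℕ):ℤ)^d)^(k'*k') := by rw [← pow_mul]
      _ ≤ (((XB:ℕ):ℤ)^d)^(k*k) := pow_le_pow_right₀ hXB1 (Nat.mul_le_mul hk'le hk'le)
  -- the size comparison
  have hcle : ((c i₀).natAbs : ℤ) ≤ ((CM:ℕ):ℤ) := by
    have : (c i₀).natAbs ≤ CM := by
      rw [hCM]
      exact Finset.single_le_sum (f := fun i => (c i).natAbs)
        (fun i _ => Nat.zero_le _) (Finset.mem_univ i₀)
    exact_mod_cast this
  have hDcne : D * c i₀ ≠ 0 := mul_ne_zero hDpos.ne' (hc i₀)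
  have h1 : (q:ℕ)^E ∣ (D * c i₀).natAbs := by
    have := Int.natAbs_dvd_natAbs.mpr hDc
    simpa [Int.natAbs_pow] using this
  have h2 : (q:ℕ)^E ≤ (D * c i₀).natAbs :=
    Nat.le_of_dvd (Int.natAbs_pos.mpr hDcne) h1
  have h3 : ((q:ℕ)^E : ℤ) ≤ |D * c i₀| := by
    have h4 := (Nat.cast_le (α := ℤ)).mpr h2
    rw [Int.natCast_natAbs] at h4
    push_cast at h4
    push_cast
    exact h4
  have h2E : (2:ℕ)^E ≤ XB^(d*(k*k)) * CM := by
    have hq2 : ((2:ℕ):ℤ) ≤ ((q:ℕ):ℤ) := by exact_mod_cast hqprime.two_le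
    have c1 : ((2:ℕ):ℤ)^E ≤ ((q:ℕ):ℤ)^E := pow_le_pow_left₀ (by norm_num) hq2 E
    have c2 : |D * c i₀| = D * ((c i₀).natAbs : ℤ) := by
      rw [abs_mul, abs_of_pos hDpos, Int.natCast_natAbs]
    have c3 : D * ((c i₀).natAbs : ℤ) ≤ (((XB:ℕ):ℤ)^d)^(k*k) * ((CM:ℕ):ℤ) := by
      apply mul_le_mul hDle hcle (by positivity) (by positivity)
    have c4 : ((2:ℕ):ℤ)^E ≤ (((XB:ℕ):ℤ)^d)^(k*k) * ((CM:ℕ):ℤ) := by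
      calc ((2:ℕ):ℤ)^E ≤ ((q:ℕ):ℤ)^E := c1
        _ ≤ |D * c i₀| := h3
        _ = D * ((c i₀).natAbs : ℤ) := c2
        _ ≤ _ := c3
    have c5 : (((XB:ℕ):ℤ)^d)^(k*k) * ((CM:ℕ):ℤ) = (((XB^(d*(k*k)) * CM : ℕ)) : ℤ) := by
      push_cast
      rw [← pow_mul]
    rw [c5] at c4
    exact_mod_cast c4
  have hCM2 : CM ≤ 2^CM := (Nat.lt_two_pow_self (n := CM)).le
  have hXB2pow : XB^(d*(k*k)) ≤ 2^(XB*(d*(k*k))) := by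
    calc XB^(d*(k*k)) ≤ (2^XB)^(d*(k*k)) :=
          Nat.pow_le_pow_left (Nat.lt_two_pow_self (n := XB)).le _
      _ = 2^(XB*(d*(k*k))) := by rw [← pow_mul]
  have hEb : E ≤ XB*(d*(k*k)) + CM := by
    have : (2:ℕ)^E ≤ 2^(XB*(d*(k*k)) + CM) := by
      calc (2:ℕ)^E ≤ XB^(d*(k*k)) * CM := h2E
        _ ≤ 2^(XB*(d*(k*k))) * 2^CM := Nat.mul_le_mul hXB2pow hCM2
        _ = 2^(XB*(d*(k*k)) + CM) := by rw [← pow_add]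
    exact (Nat.pow_le_pow_iff_right (by norm_num)).mp this
  -- final contradiction
  have hG0 : 0 < G := by omega
  have hdm := Nat.div_add_mod (n₀ - 1) G
  have hrlt : (n₀-1) % G < G := Nat.mod_lt _ hG0
  have key1 : n₀ ≤ G * E + G := by
    have : G * ((n₀ - 1) / G) = G * E := by rw [hE]
    omega
  have keyGE : G * E ≤ G * (XB*(d*(k*k)) + CM) := Nat.mul_le_mul_left G hEb
  have key1' : n₀ ≤ G * (XB*(d*(k*k)) + CM) + G := by
    have := le_trans key1 (Nat.add_le_add_right keyGE G)
    exact this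
  have key2 : G * (XB*(d*(k*k)) + CM) + G + d ≤ j₀ * d := by
    rw [hj₀]
    have e1 : G*CM ≤ G*CM*d := Nat.le_mul_of_pos_right _ (by omega)
    have e2 : G ≤ G*d := Nat.le_mul_of_pos_right _ (by omega)
    calc G * (XB*(d*(k*k)) + CM) + G + d
        = G*(k*k)*XB*d + G*CM + G + d := by ring
      _ ≤ G*(k*k)*XB*d + G*CM*d + G*d + d := by omega
      _ = (G*CM + G*(k*k)*XB + G + 1) * d := by ring
      _ = (G*CM + G*k*k*XB + G + 1) * d := by ring
  have : j₀ * d ≤ n₀ := hj₀d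
  linarith




/-- If `k ≥ 2`, `c₁,…,c_k` are nonzero integers,
`2 ≤ x₁ < ⋯ < x_k` with `gcd(x₁,…,x_k) = 1`, and every nonempty subsum
`Σ_{i∈I} cᵢxᵢ^n` is nonzero for all large `n`, then
`n ↦ ω(c₁x₁^n + ⋯ + c_k x_k^n)` is unbounded. -/
theorem omega_sum_pow_unbounded (k : ℕ) (hk : 2 ≤ k)
    (c : Fin k → ℤ) (hc : ∀ i, c i ≠ 0)
    (x : Fin k → ℤ) (hx2 : ∀ i, 2 ≤ x i) (hmono : StrictMono x)
    (hgcd : Finset.univ.gcd x = 1)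
    (hsub : ∀ I : Finset (Fin k), I.Nonempty →
      ∃ N : ℕ, ∀ n ≥ N, (∑ i ∈ I, c i * x i ^ n) ≠ 0) :
    ∀ M : ℕ, ∃ n : ℕ, 1 ≤ n ∧
      M < (∑ i, c i * x i ^ n).natAbs.primeFactors.card := by
  intro M
  obtain ⟨Nu, hNu⟩ := hsub Finset.univ ⟨⟨0, by omega⟩, Finset.mem_univ _⟩
  obtain ⟨Ng, hNg⟩ := aux_growth k hk c hc x hx2 hmono
  have hiter : ∀ m : ℕ, ∃ (P : Finset ℕ) (L n₂ : ℕ), P.card = m ∧ 1 ≤ L ∧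
      (∀ p ∈ P, p.Prime ∧ ¬ (p:ℤ) ∣ ∏ i, x i) ∧ (Nu + 1 ≤ n₂) ∧
      (∀ n, n ≡ n₂ [MOD L] → ∀ p ∈ P, (p:ℤ) ∣ ∑ i, c i * x i ^ n) := by
    intro m
    induction m with
    | zero => exact ⟨∅, 1, Nu + 1, rfl, le_refl 1, by simp, le_refl _, by simp⟩
    | succ m ih =>
      obtain ⟨P, L, n₂, hcard, hL, hP, hn₂, hdvd⟩ := ih
      obtain ⟨q, n₃, hqprime, hqx, hqP, hn₃N, hn₃mod, hqdvd⟩ :=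
        aux_step k hk c hc x hx2 hmono hgcd Ng hNg P L n₂ hL hP hdvd (Nu + 1)
      refine ⟨insert q P, L * (q - 1), n₃, ?_, ?_, ?_, hn₃N, ?_⟩
      · rw [Finset.card_insert_of_notMem hqP, hcard]
      · have h2 := hqprime.two_le
        have h3 : 1 ≤ q - 1 := by omega
        calc 1 = 1*1 := rfl
          _ ≤ L * (q-1) := Nat.mul_le_mul hL h3
      · intro p hp
        rcases Finset.mem_insert.mp hp with h | h
        · subst h; exact ⟨hqprime, hqx⟩
        · exact hP p h
      · intro n hn p hp
        rcases Finset.mem_insert.mp hp with h | h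
        · subst h
          have hmod' : n₃ ≡ n [MOD p - 1] :=
            (Nat.ModEq.of_dvd (dvd_mul_left _ _) hn).symm
          have hpx : ∀ i, ¬ (p:ℤ) ∣ x i := fun i hd =>
            hqx (dvd_trans hd (Finset.dvd_prod_of_mem x (Finset.mem_univ i)))
          exact aux_fermat k c x p hqprime hpx hmod' hqdvd
        · have h1 : n ≡ n₃ [MOD L] := Nat.ModEq.of_dvd (dvd_mul_right _ _) hn
          exact hdvd n (h1.trans hn₃mod) p h
  obtain ⟨P, L, n₂, hcard, hL, hP, hn₂, hdvd⟩ := hiter (M+1)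
  refine ⟨n₂, by omega, ?_⟩
  have hSne : (∑ i, c i * x i ^ n₂) ≠ 0 := hNu n₂ (by omega)
  have hsubset : P ⊆ (∑ i, c i * x i ^ n₂).natAbs.primeFactors := by
    intro p hp
    rw [Nat.mem_primeFactors]
    refine ⟨(hP p hp).1, ?_, Int.natAbs_ne_zero.mpr hSne⟩
    have h1 := hdvd n₂ (Nat.ModEq.refl _) p hp
    have h2 := Int.natAbs_dvd_natAbs.mpr h1
    simpa using h2
  have hfin := Finset.card_le_card hsubset
  omega
end
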